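/- arXiv:2410.10243 — 6 statements merged into one kernel-verified Lean document; each statement's English description precedes it below -/
import Mathlib

section
/- Let X be a non-empty set, let Σ_Z be a σ-algebra on Z = X × {0,1}, let 𝒟 be a set of probability measures on (Z, Σ_Z), and let H ⊆ {0,1}^X be a non-empty hypothesis space that is well-behaved with respect to 𝒟. If H has finite VC dimension, then H has the uniform convergence property with respect to 𝒟. -/
open MeasureTheory

namespace PAC

variable {X : Type*}

/-- The graph `Γ(h) = {(x,y) ∈ Z : h x = y}` of a hypothesis `h : X → {0,1}`. -/
def graph (h : X → Bool) : Set (X × Bool) := {z | h z.1 = z.2}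

/-- The true error `er_D(h) = D(Z \ Γ(h))`. -/
noncomputable def trueError [MeasurableSpace (X × Bool)]
    (D : Measure (X × Bool)) (h : X → Bool) : ℝ :=
  (D {z : X × Bool | h z.1 ≠ z.2}).toReal

/-- The sample error `ˆer_z(h) = (1/m)·#{i : h x_i ≠ y_i}`. -/
noncomputable def empError {m : ℕ} (z : Fin m → X × Bool) (h : X → Bool) : ℝ :=
  ((Finset.univ.filter fun i => h (z i).1 ≠ (z i).2).card : ℝ) / (m : ℝ)

/-- `opt_D(H) = inf_{h ∈ H} er_D(h)`. -/
noncomputable def optError [MeasurableSpace (X × Bool)]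
    (D : Measure (X × Bool)) (H : Set (X → Bool)) : ℝ :=
  ⨅ h : H, trueError D h.1

/-- `ˆopt_z(H) = inf_{h ∈ H} ˆer_z(h)`. -/
noncomputable def empOpt {m : ℕ} (z : Fin m → X × Bool) (H : Set (X → Bool)) : ℝ :=
  ⨅ h : H, empError z h.1

/-- The map `U : Z^m → [0,1]`, `z ↦ sup_{h ∈ H} |er_D(h) − ˆer_z(h)|`. -/
noncomputable def U [MeasurableSpace (X × Bool)] (H : Set (X → Bool))
    (m : ℕ) (D : Measure (X × Bool)) (z : Fin m → X × Bool) : ℝ :=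
  ⨆ h : H, |trueError D h.1 - empError z h.1|

/-- The map `V : Z^m × Z^m = Z^{2m} → ℝ`,
`(z,z') ↦ sup_{h ∈ H} |ˆer_{z'}(h) − ˆer_z(h)|`. -/
noncomputable def V (H : Set (X → Bool)) (m : ℕ)
    (p : (Fin m → X × Bool) × (Fin m → X × Bool)) : ℝ :=
  ⨆ h : H, |empError p.2 h.1 - empError p.1 h.1|

/-- `H` is well-behaved with respect to `𝒟`. -/
def WellBehaved [MeasurableSpace (X × Bool)] (H : Set (X → Bool))
    (𝒟 : Set (Measure (X × Bool))) : Prop :=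
  (∀ h ∈ H, MeasurableSet (graph h)) ∧
  ∃ mH : ℕ, 0 < mH ∧ ∀ m : ℕ, mH ≤ m →
    Measurable (V H m) ∧ ∀ D ∈ 𝒟, Measurable (U H m D)

/-- `H` has the uniform convergence property with respect to `𝒟`. -/
def UCP [MeasurableSpace (X × Bool)] (H : Set (X → Bool))
    (𝒟 : Set (Measure (X × Bool))) : Prop :=
  ∃ mH : ℕ, 0 < mH ∧
    (∀ m : ℕ, mH ≤ m → ∀ D ∈ 𝒟, Measurable (U H m D)) ∧
    ∀ ε ∈ Set.Ioo (0:ℝ) 1, ∀ δ ∈ Set.Ioo (0:ℝ) 1, ∃ m₀ : ℕ, mH ≤ m₀ ∧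
      ∀ m : ℕ, m₀ ≤ m → ∀ D ∈ 𝒟,
        ENNReal.ofReal (1 - δ) ≤
          Measure.pi (fun _ : Fin m => D) {z | U H m D z ≤ ε}

/-- A learning function `A` (defined on all multi-samples) whose values lie in `H`. -/
def IsLearningFunction (H : Set (X → Bool))
    (A : ∀ m : ℕ, (Fin m → X × Bool) → (X → Bool)) : Prop :=
  ∀ (m : ℕ) (z : Fin m → X × Bool), A m z ∈ H

/-- The learning function `A` is PAC with respect to `𝒟`. -/
def IsPAC [MeasurableSpace (X × Bool)] (H : Set (X → Bool))
    (𝒟 : Set (Measure (X × Bool)))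
    (A : ∀ m : ℕ, (Fin m → X × Bool) → (X → Bool)) : Prop :=
  ∀ ε ∈ Set.Ioo (0:ℝ) 1, ∀ δ ∈ Set.Ioo (0:ℝ) 1, ∃ m₀ : ℕ, 0 < m₀ ∧
    ∀ m : ℕ, m₀ ≤ m → ∀ D ∈ 𝒟, ∃ C : Set (Fin m → X × Bool),
      MeasurableSet C ∧
      C ⊆ {z | trueError D (A m z) - optError D H ≤ ε} ∧
      ENNReal.ofReal (1 - δ) ≤ Measure.pi (fun _ : Fin m => D) C

/-- `H` is PAC learnable with respect to `𝒟`. -/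
def PACLearnable [MeasurableSpace (X × Bool)] (H : Set (X → Bool))
    (𝒟 : Set (Measure (X × Bool))) : Prop :=
  ∃ A : ∀ m : ℕ, (Fin m → X × Bool) → (X → Bool),
    IsLearningFunction H A ∧ IsPAC H 𝒟 A

/-- The learning function `A` nearly minimizes the sample error. -/
def IsNMSE (H : Set (X → Bool))
    (A : ∀ m : ℕ, (Fin m → X × Bool) → (X → Bool)) : Prop :=
  ∀ ε ∈ Set.Ioo (0:ℝ) 1, ∃ m₀ : ℕ, 0 < m₀ ∧
    ∀ m : ℕ, m₀ ≤ m → ∀ z : Fin m → X × Bool,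
      empError z (A m z) - empOpt z H ≤ ε

/-- `H` shatters the finite set `A ⊆ X`. -/
def Shatters (H : Set (X → Bool)) (A : Finset X) : Prop :=
  ∀ f : X → Bool, ∃ h ∈ H, ∀ x ∈ A, h x = f x

/-- `vc(H) < ∞`. -/
def FiniteVC (H : Set (X → Bool)) : Prop :=
  ∃ d : ℕ, ∀ A : Finset X, Shatters H A → A.card ≤ d

/-- A discrete uniform distribution on `(Z, Σ_Z)`. -/
def IsDiscreteUniform [MeasurableSpace (X × Bool)]
    (D : Measure (X × Bool)) : Prop :=
  ∃ (ℓ : ℕ), 0 < ℓ ∧ ∃ z : Fin ℓ → X × Bool,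
    D = (ℓ : ENNReal)⁻¹ • ∑ j, Measure.dirac (z j)



open ENNReal Finset Nat

lemma moment_bound : ∀ (m k : ℕ) (c : Fin m → ℝ), (∀ i, |c i| ≤ 1) →
    ∑ σ : Fin m → Bool, (∑ i, (if σ i then (-1:ℝ) else 1) * c i) ^ (2*k)
      ≤ 2^m * ((2*k)! : ℝ) * (m:ℝ)^k := by
  intro m
  induction m with
  | zero =>
    intro k c _
    rcases Nat.eq_zero_or_pos k with rfl | hk
    · simp
    · have h2k : 2*k ≠ 0 := by omega
      simp [Finset.univ_unique, zero_pow h2k, zero_pow hk.ne', Finset.sum_const]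
  | succ m ih =>
    intro k c hc
    have hc' : ∀ i : Fin m, |c i.succ| ≤ 1 := fun i => hc i.succ
    set s : Bool → ℝ := fun b => if b then (-1:ℝ) else 1 with hs
    set y : (Fin m → Bool) → ℝ := fun σ' => ∑ i, s (σ' i) * c i.succ with hy
    set e := Fin.consEquiv (fun _ : Fin (m+1) => Bool) with he
    have key : ∑ σ : Fin (m+1) → Bool, (∑ i, s (σ i) * c i) ^ (2*k)
        = ∑ j ∈ range (2*k+1), ((-1:ℝ)^j + 1) * (c 0)^j * (∑ σ' : Fin m → Bool, (y σ') ^ (2*k-j)) * ((2*k).choose j) := by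
      have h1 : ∀ (b : Bool) (σ' : Fin m → Bool),
          (∑ i, s (e (b, σ') i) * c i) = s b * c 0 + y σ' := by
        intro b σ'
        rw [Fin.sum_univ_succ]
        simp [he, Fin.consEquiv, hy]
      calc ∑ σ : Fin (m+1) → Bool, (∑ i, s (σ i) * c i) ^ (2*k)
          = ∑ p : Bool × (Fin m → Bool), (∑ i, s (e p i) * c i) ^ (2*k) :=
            (Equiv.sum_comp e fun σ => (∑ i, s (σ i) * c i) ^ (2*k)).symm
        _ = ∑ b, ∑ σ' : Fin m → Bool, (s b * c 0 + y σ') ^ (2*k) := by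
            rw [Fintype.sum_prod_type]
            exact Finset.sum_congr rfl fun b _ => Finset.sum_congr rfl fun σ' _ => by rw [h1]
        _ = ∑ b, ∑ σ' : Fin m → Bool, ∑ j ∈ range (2*k+1),
              (s b * c 0)^j * (y σ')^(2*k-j) * ((2*k).choose j) := by
            simp_rw [add_pow]
        _ = ∑ b, ∑ j ∈ range (2*k+1), ∑ σ' : Fin m → Bool,
              (s b * c 0)^j * (y σ')^(2*k-j) * ((2*k).choose j) :=
            Finset.sum_congr rfl fun b _ => Finset.sum_comm
        _ = ∑ j ∈ range (2*k+1), ∑ b, ∑ σ' : Fin m → Bool,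
              (s b * c 0)^j * (y σ')^(2*k-j) * ((2*k).choose j) := Finset.sum_comm
        _ = ∑ j ∈ range (2*k+1), ((-1:ℝ)^j + 1) * (c 0)^j * (∑ σ' : Fin m → Bool, (y σ') ^ (2*k-j)) * ((2*k).choose j) := by
            refine Finset.sum_congr rfl fun j _ => ?_
            rw [Fintype.sum_bool, ← Finset.sum_add_distrib]
            have h2 : ∀ σ' : Fin m → Bool,
                (s true * c 0)^j * (y σ')^(2*k-j) * ((2*k).choose j)
                  + (s false * c 0)^j * (y σ')^(2*k-j) * ((2*k).choose j)
                = (((-1:ℝ)^j + 1) * (c 0)^j * ((2*k).choose j)) * (y σ')^(2*k-j) := by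
              intro σ'
              have : s true = -1 := rfl
              have h4 : s false = 1 := rfl
              rw [this, h4]
              ring
            rw [Finset.sum_congr rfl fun σ' _ => h2 σ', ← Finset.mul_sum]
            ring
    rw [key]
    have hreindex : ∑ j ∈ range (2*k+1), ((-1:ℝ)^j + 1) * (c 0)^j
          * (∑ σ' : Fin m → Bool, (y σ') ^ (2*k-j)) * ((2*k).choose j)
        = ∑ i ∈ range (k+1), 2 * (c 0)^(2*i)
          * (∑ σ' : Fin m → Bool, (y σ') ^ (2*(k-i))) * ((2*k).choose (2*i)) := by
      rw [← Finset.sum_filter_of_ne (p := fun j => Even j)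
        (fun j _ hne => by
          by_contra hodd
          have : ((-1:ℝ)^j + 1) = 0 := by
            rw [(Nat.not_even_iff_odd.mp hodd).neg_one_pow]; ring
          apply hne; rw [this]; ring)]
      refine Finset.sum_nbij' (fun j => j / 2) (fun i => 2 * i) ?_ ?_ ?_ ?_ ?_
      · intro j hj
        simp only [Finset.mem_filter, Finset.mem_range] at hj
        simp only [Finset.mem_range]
        omega
      · intro i hi
        simp only [Finset.mem_range] at hi
        simp only [Finset.mem_filter, Finset.mem_range]
        exact ⟨by omega, even_two_mul i⟩
      · intro j hj
        simp only [Finset.mem_filter, Finset.mem_range] at hj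
        obtain ⟨-, r, hr⟩ := hj
        show 2 * (j / 2) = j
        omega
      · intro i hi
        show (2*i) / 2 = i
        omega
      · intro j hj
        simp only [Finset.mem_filter, Finset.mem_range] at hj
        obtain ⟨hjlt, r, hr⟩ := hj
        have h2 : 2 * (j / 2) = j := by omega
        show _ = 2 * (c 0)^(2*(j/2)) * (∑ σ' : Fin m → Bool, (y σ') ^ (2*(k-j/2))) * ((2*k).choose (2*(j/2)))
        rw [h2]
        have hneg : ((-1:ℝ))^j = 1 := by
          rw [show j = 2 * (j/2) from h2.symm, pow_mul]
          norm_num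
        rw [hneg]
        have he2 : 2*k - j = 2*(k - j/2) := by omega
        rw [he2]
        norm_num
    rw [hreindex]
    have hstep : ∀ i ∈ range (k+1),
        2 * (c 0)^(2*i) * (∑ σ' : Fin m → Bool, (y σ') ^ (2*(k-i))) * ((2*k).choose (2*i))
          ≤ (2 * 2^m * (m:ℝ)^(k-i)) * (((2*(k-i))! : ℝ) * ((2*k).choose (2*i))) := by
      intro i hi
      have hS0 : (0:ℝ) ≤ ∑ σ' : Fin m → Bool, (y σ') ^ (2*(k-i)) := by
        refine Finset.sum_nonneg fun σ' _ => ?_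
        rw [pow_mul]
        exact pow_nonneg (sq_nonneg _) _
      have hSB : ∑ σ' : Fin m → Bool, (y σ') ^ (2*(k-i))
          ≤ 2^m * ((2*(k-i))! : ℝ) * (m:ℝ)^(k-i) := ih (k-i) (fun i => c i.succ) hc'
      have hc0 : (c 0)^(2*i) ≤ 1 := by
        rw [pow_mul]
        exact pow_le_one₀ (sq_nonneg _) ((sq_le_one_iff_abs_le_one (a := c 0)).mpr (hc 0))
      have hc0' : (0:ℝ) ≤ (c 0)^(2*i) := by rw [pow_mul]; exact pow_nonneg (sq_nonneg _) _
      calc 2 * (c 0)^(2*i) * (∑ σ' : Fin m → Bool, (y σ') ^ (2*(k-i))) * ((2*k).choose (2*i))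
          ≤ 2 * 1 * (2^m * ((2*(k-i))! : ℝ) * (m:ℝ)^(k-i)) * ((2*k).choose (2*i)) := by
            gcongr
        _ = (2 * 2^m * (m:ℝ)^(k-i)) * (((2*(k-i))! : ℝ) * ((2*k).choose (2*i))) := by ring
    refine le_trans (Finset.sum_le_sum hstep) ?_
    have hstep2 : ∀ i ∈ range (k+1),
        (2 * 2^m * (m:ℝ)^(k-i)) * (((2*(k-i))! : ℝ) * ((2*k).choose (2*i)))
          ≤ (2 * 2^m * (m:ℝ)^(k-i)) * (((2*k)! : ℝ) * (k.choose i)) := by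
      intro i hi
      have hik : i ≤ k := by simpa using Nat.lt_succ_iff.mp (Finset.mem_range.mp hi)
      have hnat : (2*(k-i))! * ((2*k).choose (2*i)) ≤ (2*k)! * (k.choose i) := by
        have h2i : 2*i ≤ 2*k := by omega
        calc (2*(k-i))! * ((2*k).choose (2*i))
            ≤ ((2*k).choose (2*i)) * (2*i)! * (2*k - 2*i)! := by
              rw [show 2*(k-i) = 2*k - 2*i by omega]
              rw [mul_comm]
              exact Nat.mul_le_mul (Nat.le_mul_of_pos_right _ (Nat.factorial_pos _)) le_rfl
          _ = (2*k)! := Nat.choose_mul_factorial_mul_factorial h2i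
          _ ≤ (2*k)! * (k.choose i) := Nat.le_mul_of_pos_right _ (Nat.choose_pos hik)
      have hpos : (0:ℝ) ≤ 2 * 2^m * (m:ℝ)^(k-i) := by positivity
      refine mul_le_mul_of_nonneg_left ?_ hpos
      exact_mod_cast hnat
    refine le_trans (Finset.sum_le_sum hstep2) ?_
    have : ∑ i ∈ range (k+1), (2 * 2^m * (m:ℝ)^(k-i)) * (((2*k)! : ℝ) * (k.choose i))
        = 2^(m+1) * ((2*k)! : ℝ) * ((1:ℝ) + m)^k := by
      rw [add_pow, Finset.mul_sum]
      refine Finset.sum_congr rfl fun i hi => ?_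
      rw [one_pow]
      ring
    rw [this]
    have : ((1:ℝ) + m)^k = ((m+1 : ℕ) : ℝ)^k := by push_cast; ring_nf
    rw [this]

lemma count_bound (m k : ℕ) (c : Fin m → ℝ) (hc : ∀ i, |c i| ≤ 1) {t : ℝ} (ht : 0 < t) :
    ((Finset.univ.filter fun σ : Fin m → Bool =>
        t ≤ |∑ i, (if σ i then (-1:ℝ) else 1) * c i|).card : ℝ)
      ≤ 2^m * ((2*k)! : ℝ) * (m:ℝ)^k / t^(2*k) := by
  set S : (Fin m → Bool) → ℝ := fun σ => ∑ i, (if σ i then (-1:ℝ) else 1) * c i with hS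
  have h1 : ∀ σ ∈ Finset.univ.filter fun σ : Fin m → Bool => t ≤ |S σ|,
      t^(2*k) ≤ (S σ)^(2*k) := by
    intro σ hσ
    have := (Finset.mem_filter.mp hσ).2
    calc t^(2*k) ≤ |S σ|^(2*k) := pow_le_pow_left₀ ht.le this _
      _ = (S σ)^(2*k) := by rw [← abs_pow, abs_of_nonneg (by rw [pow_mul]; positivity)]
  have h2 : ((Finset.univ.filter fun σ : Fin m → Bool => t ≤ |S σ|).card : ℝ) * t^(2*k)
      ≤ ∑ σ : Fin m → Bool, (S σ)^(2*k) := by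
    calc ((Finset.univ.filter fun σ : Fin m → Bool => t ≤ |S σ|).card : ℝ) * t^(2*k)
        = ∑ _σ ∈ Finset.univ.filter fun σ : Fin m → Bool => t ≤ |S σ|, t^(2*k) := by
          rw [Finset.sum_const, nsmul_eq_mul]
      _ ≤ ∑ σ ∈ Finset.univ.filter fun σ : Fin m → Bool => t ≤ |S σ|, (S σ)^(2*k) :=
          Finset.sum_le_sum h1
      _ ≤ ∑ σ : Fin m → Bool, (S σ)^(2*k) := by
          refine Finset.sum_le_sum_of_subset_of_nonneg (Finset.filter_subset _ _) ?_
          intro σ _ _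
          rw [pow_mul]; positivity
  have h3 := le_trans h2 (moment_bound m k c hc)
  rw [le_div_iff₀ (by positivity)]
  exact h3

lemma sum_choose_le_pow (d n : ℕ) : ∑ j ∈ Finset.Iic d, n.choose j ≤ (n+1)^d := by
  have h1 : Finset.Iic d = Finset.range (d+1) := by
    ext j; simp [Nat.lt_succ_iff]
  rw [h1]
  calc ∑ j ∈ range (d+1), n.choose j ≤ ∑ j ∈ range (d+1), d.choose j * n^j := by
        refine Finset.sum_le_sum fun j hj => ?_
        have hjd : j ≤ d := by have := Finset.mem_range.mp hj; omega
        calc n.choose j ≤ n^j := Nat.choose_le_pow n j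
          _ ≤ d.choose j * n^j := Nat.le_mul_of_pos_left _ (Nat.choose_pos hjd)
    _ = (n+1)^d := by
        rw [add_pow]
        refine Finset.sum_congr rfl fun j hj => ?_
        rw [one_pow, Nat.cast_id]
        ring

lemma sauer_patterns {X : Type*} (H : Set (X → Bool)) (d : ℕ)
    (hvc : ∀ A : Finset X, Shatters H A → A.card ≤ d)
    (m : ℕ) (z z' : Fin m → X × Bool) :
    ∃ TF : Finset (Fin m → Bool × Bool),
      (TF.card : ℝ) ≤ ((2*m+1 : ℕ) : ℝ)^d ∧
      ∀ h ∈ H, (fun i => (h (z i).1, h (z' i).1)) ∈ TF := by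
  classical
  set pt : Fin m × Bool → X := fun j => if j.2 then (z' j.1).1 else (z j.1).1 with hpt
  set tr : (X → Bool) → Finset (Fin m × Bool) :=
    fun h => Finset.univ.filter (fun j => h (pt j) = true) with htr
  set 𝒜 : Finset (Finset (Fin m × Bool)) := (Set.toFinite (tr '' H)).toFinset with h𝒜
  have hmem𝒜 : ∀ u, u ∈ 𝒜 ↔ ∃ h ∈ H, tr h = u := by
    intro u
    rw [h𝒜, Set.Finite.mem_toFinset]
    exact Set.mem_image _ _ _
  have hvcA : 𝒜.vcDim ≤ d := by
    refine Finset.sup_le fun s hs => ?_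
    rw [Finset.mem_shatterer] at hs
    have hinj : Set.InjOn pt s := by
      intro j1 hj1 j2 hj2 heq
      by_contra hne
      obtain ⟨u, hu, hsu⟩ := hs (Finset.singleton_subset_iff.mpr hj1)
      obtain ⟨h, -, rfl⟩ := (hmem𝒜 u).mp hu
      have h1 : j1 ∈ s ∩ tr h := hsu ▸ Finset.mem_singleton_self j1
      have hh1 : h (pt j1) = true := by
        have := (Finset.mem_inter.mp h1).2
        rw [htr] at this
        simpa using this
      have h2 : j2 ∈ s ∩ tr h := by
        refine Finset.mem_inter.mpr ⟨hj2, ?_⟩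
        rw [htr]
        simpa [heq ▸ hh1]
      rw [hsu, Finset.mem_singleton] at h2
      exact hne h2.symm
    have hshat : Shatters H (s.image pt) := by
      intro f
      obtain ⟨u, hu, hsu⟩ := hs (Finset.filter_subset (fun j => f (pt j) = true) s)
      obtain ⟨h, hH, rfl⟩ := (hmem𝒜 u).mp hu
      refine ⟨h, hH, ?_⟩
      intro x hx
      obtain ⟨j, hj, rfl⟩ := Finset.mem_image.mp hx
      cases hb : h (pt j) with
      | true =>
        have hju : j ∈ tr h := by rw [htr]; simp [hb]
        have : j ∈ s.filter (fun j => f (pt j) = true) := by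
          rw [← hsu]; exact Finset.mem_inter.mpr ⟨hj, hju⟩
        have := (Finset.mem_filter.mp this).2
        exact this.symm
      | false =>
        have hju : j ∉ s.filter (fun j => f (pt j) = true) := by
          rw [← hsu]
          intro hmem
          have := (Finset.mem_inter.mp hmem).2
          rw [htr] at this
          simp [hb] at this
        have : ¬ (f (pt j) = true) := fun hf => hju (Finset.mem_filter.mpr ⟨hj, hf⟩)
        simp at this
        exact this.symm
    have hcard := hvc _ hshat
    rwa [Finset.card_image_of_injOn hinj] at hcard
  have hchain : 𝒜.card ≤ (2*m+1)^d := by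
    calc 𝒜.card ≤ 𝒜.shatterer.card := Finset.card_le_card_shatterer 𝒜
      _ ≤ ∑ j ∈ Finset.Iic 𝒜.vcDim, (Fintype.card (Fin m × Bool)).choose j :=
          Finset.card_shatterer_le_sum_vcDim
      _ ≤ ∑ j ∈ Finset.Iic d, (Fintype.card (Fin m × Bool)).choose j := by
          refine Finset.sum_le_sum_of_subset ?_
          exact Finset.Iic_subset_Iic.mpr hvcA
      _ = ∑ j ∈ Finset.Iic d, (2*m).choose j := by
          have hcard2 : Fintype.card (Fin m × Bool) = 2*m := by
            simp only [Fintype.card_prod, Fintype.card_fin, Fintype.card_bool]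
            omega
          rw [hcard2]
      _ ≤ (2*m+1)^d := sum_choose_le_pow d (2*m)
  refine ⟨𝒜.image (fun u => fun i => (decide ((i, false) ∈ u), decide ((i, true) ∈ u))), ?_, ?_⟩
  · calc ((𝒜.image _).card : ℝ) ≤ (𝒜.card : ℝ) := by exact_mod_cast Finset.card_image_le
      _ ≤ (((2*m+1)^d : ℕ) : ℝ) := by exact_mod_cast hchain
      _ = ((2*m+1 : ℕ) : ℝ)^d := by push_cast; ring
  · intro h hH
    refine Finset.mem_image.mpr ⟨tr h, (hmem𝒜 _).mpr ⟨h, hH, rfl⟩, ?_⟩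
    funext i
    rw [htr]
    simp [hpt]

/-- pointwise error -/
noncomputable def errw (h : X → Bool) (w : X × Bool) : ℝ := if h w.1 = w.2 then 0 else 1

lemma errw_01 (h : X → Bool) (w : X × Bool) : errw h w = 0 ∨ errw h w = 1 := by
  unfold errw; split
  · exact Or.inl rfl
  · exact Or.inr rfl

lemma errw_nonneg (h : X → Bool) (w : X × Bool) : 0 ≤ errw h w := by
  rcases errw_01 h w with h1 | h1 <;> rw [h1] <;> norm_num

lemma errw_le_one (h : X → Bool) (w : X × Bool) : errw h w ≤ 1 := by
  rcases errw_01 h w with h1 | h1 <;> rw [h1] <;> norm_num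

lemma measurable_errw [MeasurableSpace (X × Bool)] {h : X → Bool}
    (hG : MeasurableSet (graph h)) : Measurable (errw h) := by
  exact Measurable.ite (show MeasurableSet {w : X × Bool | h w.1 = w.2} from hG)
    measurable_const measurable_const

lemma empError_eq_sum {m : ℕ} (z : Fin m → X × Bool) (h : X → Bool) :
    empError z h = (∑ i, errw h (z i)) / m := by
  unfold empError
  congr 1
  rw [Finset.card_filter]
  push_cast
  refine Finset.sum_congr rfl fun i _ => ?_
  by_cases hP : h (z i).1 = (z i).2 <;> simp [hP, errw]

lemma measurable_empError [MeasurableSpace (X × Bool)] {h : X → Bool}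
    (hG : MeasurableSet (graph h)) (m : ℕ) :
    Measurable (fun zz : Fin m → X × Bool => empError zz h) := by
  have : (fun zz : Fin m → X × Bool => empError zz h)
      = fun zz => (∑ i, errw h (zz i)) / m := by
    funext zz; exact empError_eq_sum zz h
  rw [this]
  exact (Finset.measurable_sum Finset.univ fun i _ =>
    (measurable_errw hG).comp (measurable_pi_apply i)).div_const _

lemma trueError_nonneg [MeasurableSpace (X × Bool)] (D : Measure (X × Bool)) (h : X → Bool) :
    0 ≤ trueError D h := ENNReal.toReal_nonneg

lemma trueError_le_one [MeasurableSpace (X × Bool)] (D : Measure (X × Bool))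
    [IsProbabilityMeasure D] (h : X → Bool) : trueError D h ≤ 1 := by
  unfold trueError
  rw [show (1:ℝ) = (1 : ℝ≥0∞).toReal by simp]
  exact ENNReal.toReal_mono one_ne_top prob_le_one

lemma empError_nonneg {m : ℕ} (z : Fin m → X × Bool) (h : X → Bool) :
    0 ≤ empError z h := by
  unfold empError; positivity

lemma empError_le_one {m : ℕ} (z : Fin m → X × Bool) (h : X → Bool) :
    empError z h ≤ 1 := by
  unfold empError
  rcases Nat.eq_zero_or_pos m with rfl | hm
  · norm_num
  · rw [div_le_one (by positivity)]
    have := Finset.card_filter_le Finset.univ (fun i : Fin m => h (z i).1 ≠ (z i).2)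
    calc ((Finset.univ.filter fun i => h (z i).1 ≠ (z i).2).card : ℝ)
        ≤ ((Finset.univ : Finset (Fin m)).card : ℝ) := by exact_mod_cast this
      _ = m := by simp

lemma trueError_eq_integral [MeasurableSpace (X × Bool)] (D : Measure (X × Bool))
    (h : X → Bool) (hG : MeasurableSet (graph h)) :
    trueError D h = ∫ w, errw h w ∂D := by
  have hs : MeasurableSet {w : X × Bool | h w.1 ≠ w.2} := by
    have : {w : X × Bool | h w.1 ≠ w.2} = (graph h)ᶜ := rfl
    rw [this]; exact hG.compl
  have : (errw h) = Set.indicator {w : X × Bool | h w.1 ≠ w.2} (1 : X × Bool → ℝ) := by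
    funext w
    rw [Set.indicator_apply]
    by_cases hP : h w.1 = w.2 <;> simp [hP, errw]
  rw [this, MeasureTheory.integral_indicator_one hs]
  rfl

/-- Chebyshev bound for a single hypothesis. -/
lemma cheb [MeasurableSpace (X × Bool)] (D : Measure (X × Bool))
    [hD : IsProbabilityMeasure D] (h : X → Bool) (hG : MeasurableSet (graph h))
    (m : ℕ) (hm : 0 < m) {α : ℝ} (hα : 0 < α) :
    Measure.pi (fun _ : Fin m => D) {zz | α ≤ |trueError D h - empError zz h|}
      ≤ ENNReal.ofReal (1/(4*m*α^2)) := by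
  letI : MeasureSpace (X × Bool) := ⟨D⟩
  haveI : IsProbabilityMeasure (volume : Measure (X × Bool)) := hD
  have hvol : Measure.pi (fun _ : Fin m => D) = (volume : Measure (Fin m → X × Bool)) := rfl
  rw [hvol]
  set p : ℝ := trueError D h with hp
  have hp0 : 0 ≤ p := trueError_nonneg D h
  have hp1 : p ≤ 1 := trueError_le_one D h
  set f : X × Bool → ℝ := fun w => errw h w - p with hf
  have hfmeas : Measurable f := (measurable_errw hG).sub measurable_const
  have hfabs : ∀ w, |f w| ≤ 1 := by
    intro w
    rcases errw_01 h w with h1 | h1 <;>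
      · rw [abs_le, hf]; constructor <;> simp [h1] <;> linarith
  have hinte : Integrable (errw h) (volume : Measure (X × Bool)) := by
    refine (integrable_const (1:ℝ)).mono' (measurable_errw hG).aestronglyMeasurable ?_
    refine Filter.Eventually.of_forall fun w => ?_
    rw [Real.norm_eq_abs, abs_of_nonneg (errw_nonneg h w)]
    exact errw_le_one h w
  have hEerrw : ∫ w, errw h w = p := (trueError_eq_integral D h hG).symm
  have hintf : Integrable f (volume : Measure (X × Bool)) :=
    hinte.sub (integrable_const p)
  have hEf : ∫ w, f w = 0 := by
    rw [hf]
    simp only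
    rw [integral_sub hinte (integrable_const p), hEerrw, integral_const]
    simp
  -- single-site variance
  have hvar : ∫ w, (f w)^2 = p - p^2 := by
    have hsq : ∀ w, (f w)^2 = errw h w * (1 - 2*p) + p^2 := by
      intro w
      rcases errw_01 h w with h1 | h1 <;> (rw [hf]; simp only; rw [h1]; ring)
    rw [show (fun w => (f w)^2) = fun w => errw h w * (1-2*p) + p^2 from funext hsq]
    rw [integral_add (hinte.mul_const _) (integrable_const _), integral_mul_const,
      hEerrw, integral_const]
    simp
    ring
  set F : (Fin m → X × Bool) → ℝ := fun zz => ∑ i, f (zz i) with hF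
  have hm' : (m:ℝ) ≠ 0 := Nat.cast_ne_zero.mpr hm.ne'
  have hmpos : (0:ℝ) < m := by exact_mod_cast hm
  have hFmeas : Measurable F :=
    Finset.measurable_sum Finset.univ fun i _ => hfmeas.comp (measurable_pi_apply i)
  have hsingle : ∀ i : Fin m, ∫ zz : Fin m → X × Bool, (f (zz i))^2 = p - p^2 := by
    intro i
    have heq : (fun zz : Fin m → X × Bool => (f (zz i))^2)
        = fun zz => ∏ t, (if t = i then (fun w => (f w)^2) else fun _ => (1:ℝ)) (zz t) := by
      funext zz
      rw [Fintype.prod_eq_single i (fun t ht => by simp [ht])]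
      simp
    rw [heq, MeasureTheory.integral_fintype_prod_volume_eq_prod]
    rw [Fintype.prod_eq_single i (fun t ht => by simp [ht])]
    simp only [if_pos rfl]
    exact hvar
  have hintprod : ∀ i j : Fin m,
      Integrable (fun zz : Fin m → X × Bool => f (zz i) * f (zz j)) volume := by
    intro i j
    refine (integrable_const (1:ℝ)).mono'
      ((hfmeas.comp (measurable_pi_apply i)).mul
        (hfmeas.comp (measurable_pi_apply j))).aestronglyMeasurable ?_
    refine Filter.Eventually.of_forall fun zz => ?_
    rw [Real.norm_eq_abs, abs_mul]
    exact mul_le_one₀ (hfabs _) (abs_nonneg _) (hfabs _)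
  have hcross : ∀ i j : Fin m, i ≠ j →
      ∫ zz : Fin m → X × Bool, f (zz i) * f (zz j) = 0 := by
    intro i j hij
    have heq : (fun zz : Fin m → X × Bool => f (zz i) * f (zz j))
        = fun zz => ∏ t, (if t = i then f else if t = j then f else fun _ => (1:ℝ)) (zz t) := by
      funext zz
      rw [Fintype.prod_eq_mul i j hij (fun t ht => by simp [ht.1, ht.2])]
      simp [hij, (show j ≠ i from hij.symm)]
    rw [heq, MeasureTheory.integral_fintype_prod_volume_eq_prod]
    refine Finset.prod_eq_zero (Finset.mem_univ i) ?_
    simp only [if_pos rfl]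
    exact hEf
  have hFsq : ∫ zz : Fin m → X × Bool, (F zz)^2 = m * (p - p^2) := by
    have hexp : (fun zz : Fin m → X × Bool => (F zz)^2)
        = fun zz => ∑ i, ∑ j, f (zz i) * f (zz j) := by
      funext zz
      rw [hF]
      simp only
      rw [sq, Finset.sum_mul_sum]
    rw [hexp]
    rw [integral_finset_sum _ (fun i _ => integrable_finset_sum _ (fun j _ => hintprod i j))]
    have hinner : ∀ i : Fin m, ∫ zz : Fin m → X × Bool, ∑ j, f (zz i) * f (zz j) = p - p^2 := by
      intro i
      rw [integral_finset_sum _ (fun j _ => hintprod i j)]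
      rw [Finset.sum_eq_single i (fun j _ hj => hcross i j (fun hh => hj hh.symm)) (by simp)]
      have : (fun zz : Fin m → X × Bool => f (zz i) * f (zz i))
          = fun zz => (f (zz i))^2 := by funext zz; ring
      rw [this, hsingle i]
    rw [Finset.sum_congr rfl fun i _ => hinner i]
    simp [Finset.sum_const]
    ring
  have hFabs : ∀ zz : Fin m → X × Bool, |F zz| ≤ m := by
    intro zz
    calc |F zz| ≤ ∑ i, |f (zz i)| := Finset.abs_sum_le_sum_abs _ _
      _ ≤ ∑ _i : Fin m, (1:ℝ) := Finset.sum_le_sum fun i _ => hfabs _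
      _ = m := by simp
  have hintF2 : Integrable (fun zz : Fin m → X × Bool => (F zz)^2) volume := by
    refine (integrable_const ((m:ℝ)^2)).mono' (hFmeas.pow_const 2).aestronglyMeasurable ?_
    refine Filter.Eventually.of_forall fun zz => ?_
    rw [Real.norm_eq_abs, abs_pow]
    exact pow_le_pow_left₀ (abs_nonneg _) (hFabs zz) 2
  have hevent : {zz : Fin m → X × Bool | α ≤ |trueError D h - empError zz h|}
      ⊆ {zz | ENNReal.ofReal ((α*m)^2) ≤ ENNReal.ofReal ((F zz)^2)} := by
    intro zz hzz
    simp only [Set.mem_setOf_eq] at hzz ⊢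
    have h1 : trueError D h - empError zz h = -(F zz) / m := by
      rw [empError_eq_sum zz h, hF]
      simp only
      rw [Finset.sum_sub_distrib, Finset.sum_const]
      simp only [Finset.card_univ, Fintype.card_fin, nsmul_eq_mul]
      field_simp
      rw [← hp]
      ring
    have h2 : α * m ≤ |F zz| := by
      rw [h1, abs_div, abs_neg, abs_of_pos hmpos] at hzz
      calc α * m ≤ (|F zz| / m) * m := mul_le_mul_of_nonneg_right hzz hmpos.le
        _ = |F zz| := by field_simp
    refine ENNReal.ofReal_le_ofReal ?_
    calc (α*m)^2 ≤ |F zz|^2 := pow_le_pow_left₀ (by positivity) h2 2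
      _ = (F zz)^2 := sq_abs _
  calc (volume : Measure (Fin m → X × Bool)) {zz | α ≤ |trueError D h - empError zz h|}
      ≤ volume {zz | ENNReal.ofReal ((α*m)^2) ≤ ENNReal.ofReal ((F zz)^2)} :=
        measure_mono hevent
    _ ≤ (∫⁻ zz, ENNReal.ofReal ((F zz)^2)) / ENNReal.ofReal ((α*m)^2) :=
        meas_ge_le_lintegral_div ((hFmeas.pow_const 2).ennreal_ofReal).aemeasurable
          (ENNReal.ofReal_pos.mpr (by positivity)).ne' ENNReal.ofReal_ne_top
    _ = ENNReal.ofReal (∫ zz, (F zz)^2) / ENNReal.ofReal ((α*m)^2) := by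
        rw [MeasureTheory.ofReal_integral_eq_lintegral_ofReal hintF2
          (Filter.Eventually.of_forall fun zz => by positivity)]
    _ ≤ ENNReal.ofReal ((m:ℝ)/4) / ENNReal.ofReal ((α*m)^2) := by
        refine ENNReal.div_le_div_right (ENNReal.ofReal_le_ofReal ?_) _
        rw [hFsq]
        have hq : p - p^2 ≤ 1/4 := by nlinarith [sq_nonneg (2*p - 1)]
        nlinarith [mul_le_mul_of_nonneg_left hq hmpos.le]
    _ = ENNReal.ofReal (((m:ℝ)/4) / ((α*m)^2)) :=
        (ENNReal.ofReal_div_of_pos (by positivity)).symm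
    _ = ENNReal.ofReal (1/(4*m*α^2)) := by
        congr 1
        field_simp

def Sswap {Z : Type*} {m : ℕ} (σ : Fin m → Bool)
    (p : (Fin m → Z) × (Fin m → Z)) : (Fin m → Z) × (Fin m → Z) :=
  (fun i => if σ i then p.2 i else p.1 i, fun i => if σ i then p.1 i else p.2 i)

lemma measurePreserving_Sswap {Z : Type*} [MeasurableSpace Z] (D : Measure Z)
    [IsProbabilityMeasure D] {m : ℕ} (σ : Fin m → Bool) :
    MeasurePreserving (Sswap σ)
      ((Measure.pi fun _ : Fin m => D).prod (Measure.pi fun _ : Fin m => D))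
      ((Measure.pi fun _ : Fin m => D).prod (Measure.pi fun _ : Fin m => D)) := by
  set e := MeasurableEquiv.arrowProdEquivProdArrow Z Z (Fin m) with he
  have h1 : MeasurePreserving (⇑e) (Measure.pi fun _ : Fin m => D.prod D)
      ((Measure.pi fun _ : Fin m => D).prod (Measure.pi fun _ : Fin m => D)) :=
    measurePreserving_arrowProdEquivProdArrow Z Z (Fin m) (fun _ => D) (fun _ => D)
  have h2 := h1.symm e
  have h3 : MeasurePreserving
      (fun (a : Fin m → Z × Z) (i : Fin m) => if σ i then (a i).swap else (a i))
      (Measure.pi fun _ : Fin m => D.prod D) (Measure.pi fun _ : Fin m => D.prod D) := by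
    refine MeasureTheory.measurePreserving_pi (fun _ : Fin m => D.prod D) (fun _ : Fin m => D.prod D) (f := fun (i : Fin m) (q : Z × Z) => if σ i then q.swap else q) (fun i => ?_)
    by_cases hb : σ i
    · simp only [hb, if_true]
      exact Measure.measurePreserving_swap
    · simp only [hb, if_false]
      exact MeasurePreserving.id _
  have hcomp := (h1.comp h3).comp h2
  have heq : ((⇑e) ∘ (fun (a : Fin m → Z × Z) (i : Fin m) => if σ i then (a i).swap else (a i)))
      ∘ (⇑e.symm) = Sswap σ := by
    funext p
    refine Prod.ext ?_ ?_ <;> (funext i; by_cases hb : σ i <;>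
      simp [he, MeasurableEquiv.arrowProdEquivProdArrow, Equiv.arrowProdEquivProdArrow,
        Sswap, Prod.swap, hb])
  rwa [heq] at hcomp


lemma absdiff_le_one {a b : ℝ} (ha0 : 0 ≤ a) (ha1 : a ≤ 1) (hb0 : 0 ≤ b) (hb1 : b ≤ 1) :
    |a - b| ≤ 1 := abs_le.mpr ⟨by linarith, by linarith⟩

lemma U_bddAbove [MeasurableSpace (X × Bool)] (D : Measure (X × Bool))
    [IsProbabilityMeasure D] (H : Set (X → Bool)) (m : ℕ) (z : Fin m → X × Bool) :
    BddAbove (Set.range fun h : H => |trueError D h.1 - empError z h.1|) := by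
  refine ⟨1, ?_⟩
  rintro x ⟨h, rfl⟩
  exact absdiff_le_one (trueError_nonneg D h.1) (trueError_le_one D h.1)
    (empError_nonneg z h.1) (empError_le_one z h.1)

lemma V_bddAbove (H : Set (X → Bool)) (m : ℕ)
    (p : (Fin m → X × Bool) × (Fin m → X × Bool)) :
    BddAbove (Set.range fun h : H => |empError p.2 h.1 - empError p.1 h.1|) := by
  refine ⟨1, ?_⟩
  rintro x ⟨h, rfl⟩
  exact absdiff_le_one (empError_nonneg p.2 h.1) (empError_le_one p.2 h.1)
    (empError_nonneg p.1 h.1) (empError_le_one p.1 h.1)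

lemma exists_witness_of_lt_U [MeasurableSpace (X × Bool)] (D : Measure (X × Bool))
    [IsProbabilityMeasure D] {H : Set (X → Bool)} (hH : H.Nonempty) (m : ℕ)
    (z : Fin m → X × Bool) {t : ℝ} (ht : t < U H m D z) :
    ∃ h ∈ H, t < |trueError D h - empError z h| := by
  haveI : Nonempty ↥H := hH.to_subtype
  by_contra hcon
  push_neg at hcon
  exact absurd (ciSup_le fun h : H => hcon h.1 h.2) (not_le.mpr ht)

lemma exists_witness_of_lt_V {H : Set (X → Bool)} (hH : H.Nonempty) (m : ℕ)
    (p : (Fin m → X × Bool) × (Fin m → X × Bool)) {t : ℝ} (ht : t < V H m p) :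
    ∃ h ∈ H, t < |empError p.2 h - empError p.1 h| := by
  haveI : Nonempty ↥H := hH.to_subtype
  by_contra hcon
  push_neg at hcon
  exact absurd (ciSup_le fun h : H => hcon h.1 h.2) (not_le.mpr ht)

lemma le_V {H : Set (X → Bool)} {h : X → Bool} (hh : h ∈ H) (m : ℕ)
    (p : (Fin m → X × Bool) × (Fin m → X × Bool)) :
    |empError p.2 h - empError p.1 h| ≤ V H m p :=
  le_ciSup (V_bddAbove H m p) (⟨h, hh⟩ : ↥H)

lemma symmetrization [MeasurableSpace (X × Bool)] (D : Measure (X × Bool))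
    [IsProbabilityMeasure D] (H : Set (X → Bool)) (hH : H.Nonempty)
    (hGmeas : ∀ h ∈ H, MeasurableSet (graph h))
    (m : ℕ) (hU : Measurable (U H m D)) (hV : Measurable (V H m))
    {ε : ℝ} (hε0 : 0 < ε) (hε1 : ε < 1) (hm : (8:ℝ)/ε^2 ≤ m) :
    Measure.pi (fun _ : Fin m => D) {z | ε < U H m D z}
      ≤ 2 * ((Measure.pi fun _ : Fin m => D).prod (Measure.pi fun _ : Fin m => D))
          {p | ε/2 < V H m p} := by
  set π1 := Measure.pi (fun _ : Fin m => D) with hπ1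
  haveI : IsProbabilityMeasure π1 := by rw [hπ1]; infer_instance
  have hmpos : 0 < m := by
    by_contra hcon
    push_neg at hcon
    interval_cases m
    simp only [Nat.cast_zero] at hm
    have : (0:ℝ) < 8/ε^2 := by positivity
    linarith
  have hmR : (0:ℝ) < m := by exact_mod_cast hmpos
  set W := {p : (Fin m → X × Bool) × (Fin m → X × Bool) | ε/2 < V H m p} with hW
  have hWmeas : MeasurableSet W := measurableSet_lt measurable_const hV
  set B := {z : Fin m → X × Bool | ε < U H m D z} with hB
  have hBmeas : MeasurableSet B := measurableSet_lt measurable_const hU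
  -- per-hypothesis Chebyshev good set bound
  have hgood : ∀ h ∈ H, (2⁻¹ : ℝ≥0∞) ≤ π1 {z' | ¬ (ε/4 ≤ |trueError D h - empError z' h|)} := by
    intro h hh
    have hBadmeas : MeasurableSet {z' : Fin m → X × Bool | ε/4 ≤ |trueError D h - empError z' h|} := by
      have hfm : Measurable fun z' : Fin m → X × Bool => |trueError D h - empError z' h| :=
        (measurable_const.sub (measurable_empError (hGmeas h hh) m)).abs
      exact measurableSet_le measurable_const hfm
    have hcheb := cheb D h (hGmeas h hh) m hmpos (show (0:ℝ) < ε/4 by linarith)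
    have hb2 : π1 {z' | ε/4 ≤ |trueError D h - empError z' h|} ≤ 2⁻¹ := by
      refine le_trans hcheb ?_
      have heq2 : 1/(4*(m:ℝ)*(ε/4)^2) = 4/((m:ℝ)*ε^2) := by
        field_simp
      rw [heq2]
      have hle : (4:ℝ)/((m:ℝ)*ε^2) ≤ 1/2 := by
        rw [div_le_div_iff₀ (by positivity) (by norm_num)]
        have : (8:ℝ) ≤ m * ε^2 := by
          rw [div_le_iff₀ (by positivity)] at hm
          nlinarith
        linarith
      calc ENNReal.ofReal (4/((m:ℝ)*ε^2)) ≤ ENNReal.ofReal (1/2) :=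
            ENNReal.ofReal_le_ofReal hle
        _ = 2⁻¹ := by
            rw [show (1:ℝ)/2 = (2:ℝ)⁻¹ by norm_num,
              ENNReal.ofReal_inv_of_pos (by norm_num)]
            norm_num
    have hcompl : {z' : Fin m → X × Bool | ¬ (ε/4 ≤ |trueError D h - empError z' h|)}
        = {z' | ε/4 ≤ |trueError D h - empError z' h|}ᶜ := rfl
    rw [hcompl, measure_compl hBadmeas (measure_ne_top _ _)]
    have h1 : π1 Set.univ = 1 := measure_univ
    rw [h1]
    calc (2⁻¹ : ℝ≥0∞) = 1 - 2⁻¹ := by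
          rw [← ENNReal.inv_two_add_inv_two, ENNReal.add_sub_cancel_right (by norm_num)]
      _ ≤ 1 - π1 {z' | ε/4 ≤ |trueError D h - empError z' h|} := tsub_le_tsub_left hb2 1
  -- Fubini lower bound
  have hfub : (2⁻¹ : ℝ≥0∞) * π1 B ≤ (π1.prod π1) W := by
    rw [Measure.prod_apply hWmeas]
    have hpt : ∀ z : Fin m → X × Bool,
        (2⁻¹ : ℝ≥0∞) * B.indicator 1 z ≤ π1 (Prod.mk z ⁻¹' W) := by
      intro z
      by_cases hz : z ∈ B
      · obtain ⟨h, hh, hwit⟩ := exists_witness_of_lt_U D hH m z hz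
        have hsub : {z' : Fin m → X × Bool | ¬ (ε/4 ≤ |trueError D h - empError z' h|)}
            ⊆ Prod.mk z ⁻¹' W := by
          intro z' hz'
          simp only [Set.mem_setOf_eq, not_le] at hz'
          simp only [Set.mem_preimage, hW, Set.mem_setOf_eq]
          have hdiff : ε - ε/4 < |empError z' h - empError z h| := by
            have := abs_sub_abs_le_abs_sub (trueError D h - empError z h)
              (trueError D h - empError z' h)
            have h2 : (trueError D h - empError z h) - (trueError D h - empError z' h)
                = empError z' h - empError z h := by ring
            rw [h2] at this
            linarith
          have hle := le_V hh m (z, z')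
          simp only at hle
          calc ε/2 < ε - ε/4 := by linarith
            _ < |empError z' h - empError z h| := hdiff
            _ ≤ V H m (z, z') := hle
        calc (2⁻¹ : ℝ≥0∞) * B.indicator 1 z ≤ 2⁻¹ := by
              rw [Set.indicator_of_mem hz]
              simp
          _ ≤ π1 {z' | ¬ (ε/4 ≤ |trueError D h - empError z' h|)} := hgood h hh
          _ ≤ π1 (Prod.mk z ⁻¹' W) := measure_mono hsub
      · rw [Set.indicator_of_notMem hz]
        simp
    calc (2⁻¹ : ℝ≥0∞) * π1 B = ∫⁻ z, 2⁻¹ * B.indicator 1 z ∂π1 := by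
          rw [lintegral_const_mul _ (measurable_one.indicator hBmeas),
            lintegral_indicator_one hBmeas]
      _ ≤ ∫⁻ z, π1 (Prod.mk z ⁻¹' W) ∂π1 := lintegral_mono hpt
  calc π1 B = 2 * (2⁻¹ * π1 B) := by
        rw [← mul_assoc, ENNReal.mul_inv_cancel (by norm_num) (by norm_num), one_mul]
    _ ≤ 2 * (π1.prod π1) W := by
        exact mul_le_mul_right hfub 2

lemma swap_bound [MeasurableSpace (X × Bool)] (D : Measure (X × Bool))
    [IsProbabilityMeasure D] (H : Set (X → Bool)) (hH : H.Nonempty)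
    (d k : ℕ) (hd : ∀ A : Finset X, Shatters H A → A.card ≤ d)
    (m : ℕ) (hm : 0 < m) (hV : Measurable (V H m)) {ε : ℝ} (hε0 : 0 < ε) :
    ((Measure.pi fun _ : Fin m => D).prod (Measure.pi fun _ : Fin m => D)) {p | ε/2 < V H m p}
      ≤ ENNReal.ofReal (((2*m+1:ℕ):ℝ)^d * ((2*k)! : ℝ) * (m:ℝ)^k / ((m:ℝ)*ε/2)^(2*k)) := by
  classical
  set π1 := Measure.pi (fun _ : Fin m => D) with hπ1
  haveI : IsProbabilityMeasure π1 := by rw [hπ1]; infer_instance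
  set π2 := π1.prod π1 with hπ2
  haveI : IsProbabilityMeasure π2 := by rw [hπ2]; infer_instance
  have hmR : (0:ℝ) < m := by exact_mod_cast hm
  set W := {p : (Fin m → X × Bool) × (Fin m → X × Bool) | ε/2 < V H m p} with hWdef
  have hWmeas : MeasurableSet W := measurableSet_lt measurable_const hV
  set Bnd : ℝ := ((2*m+1:ℕ):ℝ)^d * ((2*k)! : ℝ) * (m:ℝ)^k / ((m:ℝ)*ε/2)^(2*k) with hBnddef
  have htpos : (0:ℝ) < (m:ℝ)*ε/2 := by positivity
  have hBndpos : 0 ≤ Bnd := by rw [hBnddef]; positivity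
  have hcount : ∀ p : (Fin m → X × Bool) × (Fin m → X × Bool),
      ((Finset.univ.filter fun σ : Fin m → Bool => Sswap σ p ∈ W).card : ℝ)
        ≤ 2^m * Bnd := by
    intro p
    obtain ⟨TF, hTFcard, hTFmem⟩ := sauer_patterns H d hd m p.1 p.2
    set c : (Fin m → Bool × Bool) → Fin m → ℝ :=
      fun q i => (if (q i).2 = (p.2 i).2 then (0:ℝ) else 1)
        - (if (q i).1 = (p.1 i).2 then (0:ℝ) else 1) with hcdef
    have hcbound : ∀ q i, |c q i| ≤ 1 := by
      intro q i
      rw [hcdef]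
      dsimp only
      split_ifs <;> norm_num
    have hsub : (Finset.univ.filter fun σ : Fin m → Bool => Sswap σ p ∈ W)
        ⊆ TF.biUnion (fun q => Finset.univ.filter fun σ : Fin m → Bool =>
            (m:ℝ)*ε/2 ≤ |∑ i, (if σ i then (-1:ℝ) else 1) * c q i|) := by
      intro σ hσ
      rw [Finset.mem_filter] at hσ
      obtain ⟨-, hσW⟩ := hσ
      rw [hWdef, Set.mem_setOf_eq] at hσW
      obtain ⟨h, hh, hwit⟩ := exists_witness_of_lt_V hH m _ hσW
      refine Finset.mem_biUnion.mpr ⟨(fun i => (h (p.1 i).1, h (p.2 i).1)), hTFmem h hh, ?_⟩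
      rw [Finset.mem_filter]
      refine ⟨Finset.mem_univ σ, ?_⟩
      have hkey : empError (Sswap σ p).2 h - empError (Sswap σ p).1 h
          = (∑ i, (if σ i then (-1:ℝ) else 1)
              * c (fun i => (h (p.1 i).1, h (p.2 i).1)) i) / m := by
        rw [empError_eq_sum, empError_eq_sum, div_sub_div_same, ← Finset.sum_sub_distrib]
        congr 1
        refine Finset.sum_congr rfl fun i _ => ?_
        cases hb : σ i <;>
          · simp [Sswap, hb, hcdef, errw]
            try ring
      rw [hkey, abs_div, abs_of_pos hmR] at hwit
      have h3 := (lt_div_iff₀ hmR).mp hwit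
      linarith
    have hcount2 : ∀ q ∈ TF,
        ((Finset.univ.filter fun σ : Fin m → Bool =>
          (m:ℝ)*ε/2 ≤ |∑ i, (if σ i then (-1:ℝ) else 1) * c q i|).card : ℝ)
          ≤ 2^m * ((2*k)! : ℝ) * (m:ℝ)^k / ((m:ℝ)*ε/2)^(2*k) :=
      fun q _ => count_bound m k (c q) (hcbound q) htpos
    calc ((Finset.univ.filter fun σ : Fin m → Bool => Sswap σ p ∈ W).card : ℝ)
        ≤ ((TF.biUnion fun q => Finset.univ.filter fun σ : Fin m → Bool =>
            (m:ℝ)*ε/2 ≤ |∑ i, (if σ i then (-1:ℝ) else 1) * c q i|).card : ℝ) := by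
          exact_mod_cast Finset.card_le_card hsub
      _ ≤ ∑ q ∈ TF, ((Finset.univ.filter fun σ : Fin m → Bool =>
            (m:ℝ)*ε/2 ≤ |∑ i, (if σ i then (-1:ℝ) else 1) * c q i|).card : ℝ) := by
          exact_mod_cast Finset.card_biUnion_le
      _ ≤ ∑ _q ∈ TF, (2^m * ((2*k)! : ℝ) * (m:ℝ)^k / ((m:ℝ)*ε/2)^(2*k)) :=
          Finset.sum_le_sum hcount2
      _ = (TF.card : ℝ) * (2^m * ((2*k)! : ℝ) * (m:ℝ)^k / ((m:ℝ)*ε/2)^(2*k)) := by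
          rw [Finset.sum_const, nsmul_eq_mul]
      _ ≤ ((2*m+1:ℕ):ℝ)^d * (2^m * ((2*k)! : ℝ) * (m:ℝ)^k / ((m:ℝ)*ε/2)^(2*k)) := by
          refine mul_le_mul_of_nonneg_right hTFcard (by positivity)
      _ = 2^m * Bnd := by
          rw [hBnddef]
          field_simp
  have hSmeas : ∀ σ : Fin m → Bool,
      Measurable (Sswap (Z := X × Bool) (m := m) σ) :=
    fun σ => (measurePreserving_Sswap D σ).measurable
  have hpre : ∀ σ : Fin m → Bool, MeasurableSet (Sswap σ ⁻¹' W) :=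
    fun σ => (hSmeas σ) hWmeas
  have hmeq : ∀ σ : Fin m → Bool, π2 (Sswap σ ⁻¹' W) = π2 W := by
    intro σ
    rw [hπ2, hπ1]
    exact (measurePreserving_Sswap D σ).measure_preimage hWmeas.nullMeasurableSet
  have h2m0 : ((2:ℝ≥0∞)^m) ≠ 0 := by positivity
  have h2mtop : ((2:ℝ≥0∞)^m) ≠ ⊤ := by
    exact ENNReal.pow_ne_top (by norm_num)
  have hchain : (2:ℝ≥0∞)^m * π2 W ≤ (2:ℝ≥0∞)^m * ENNReal.ofReal Bnd := by
    have hc1 : (2:ℝ≥0∞)^m * π2 W = ∑ σ : Fin m → Bool, π2 (Sswap σ ⁻¹' W) := by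
      rw [Finset.sum_congr rfl fun σ _ => hmeq σ, Finset.sum_const, Finset.card_univ]
      have : Fintype.card (Fin m → Bool) = 2^m := by simp
      rw [this, nsmul_eq_mul]
      push_cast
      ring
    have hc2 : ∑ σ : Fin m → Bool, π2 (Sswap σ ⁻¹' W)
        = ∫⁻ p, ∑ σ : Fin m → Bool, (Sswap σ ⁻¹' W).indicator
            (1 : ((Fin m → X × Bool) × (Fin m → X × Bool)) → ℝ≥0∞) p ∂π2 := by
      rw [lintegral_finset_sum _ fun σ _ => measurable_one.indicator (hpre σ)]
      exact Finset.sum_congr rfl fun σ _ => (lintegral_indicator_one (hpre σ)).symm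
    have hc3 : ∀ p, (∑ σ : Fin m → Bool, (Sswap σ ⁻¹' W).indicator
          (1 : ((Fin m → X × Bool) × (Fin m → X × Bool)) → ℝ≥0∞) p)
        ≤ ENNReal.ofReal (2^m * Bnd) := by
      intro p
      have he1 : (∑ σ : Fin m → Bool, (Sswap σ ⁻¹' W).indicator
            (1 : ((Fin m → X × Bool) × (Fin m → X × Bool)) → ℝ≥0∞) p)
          = ((Finset.univ.filter fun σ : Fin m → Bool => Sswap σ p ∈ W).card : ℝ≥0∞) := by
        rw [Finset.card_filter]
        push_cast
        refine Finset.sum_congr rfl fun σ _ => ?_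
        rw [Set.indicator_apply]
        by_cases hσ : Sswap σ p ∈ W <;> simp [hσ]
      rw [he1, ← ENNReal.ofReal_natCast]
      exact ENNReal.ofReal_le_ofReal (hcount p)
    calc (2:ℝ≥0∞)^m * π2 W = ∫⁻ p, ∑ σ : Fin m → Bool,
            (Sswap σ ⁻¹' W).indicator
              (1 : ((Fin m → X × Bool) × (Fin m → X × Bool)) → ℝ≥0∞) p ∂π2 := by
          rw [hc1, hc2]
      _ ≤ ∫⁻ _p, ENNReal.ofReal (2^m * Bnd) ∂π2 := lintegral_mono hc3
      _ = ENNReal.ofReal (2^m * Bnd) := by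
          rw [lintegral_const]
          simp
      _ = (2:ℝ≥0∞)^m * ENNReal.ofReal Bnd := by
          rw [ENNReal.ofReal_mul (by positivity)]
          congr 1
          rw [ENNReal.ofReal_pow (by norm_num)]
          norm_num
  exact (ENNReal.mul_le_mul_iff_right h2m0 h2mtop).mp hchain

/-- A well-behaved hypothesis space with finite VC dimension has the uniform
convergence property. -/
theorem finiteVC_implies_UCP
    {X : Type*} [Nonempty X] [MeasurableSpace (X × Bool)]
    (𝒟 : Set (Measure (X × Bool)))
    (h𝒟prob : ∀ D ∈ 𝒟, IsProbabilityMeasure D)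
    (H : Set (X → Bool)) (hH : H.Nonempty)
    (hwb : WellBehaved H 𝒟)
    (hvc : FiniteVC H) :
    UCP H 𝒟 := by
  classical
  obtain ⟨hGmeas, mH, hmH0, hwb2⟩ := hwb
  obtain ⟨d, hd⟩ := hvc
  refine ⟨mH, hmH0, fun m hm D hD => (hwb2 m hm).2 D hD, ?_⟩
  rintro ε ⟨hε0, hε1⟩ δ ⟨hδ0, hδ1⟩
  set k := d + 1 with hk
  set C : ℝ := 2 * 3^d * ((2*k)! : ℝ) * (2/ε)^(2*k) with hC
  have hCpos : 0 < C := by rw [hC]; positivity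
  refine ⟨max mH (max (⌈(8:ℝ)/ε^2⌉₊ + 1) (⌈C/δ⌉₊ + 1)), le_max_left _ _, ?_⟩
  intro m hm D hD
  haveI : IsProbabilityMeasure D := h𝒟prob D hD
  have hmH : mH ≤ m := le_trans (le_max_left _ _) hm
  have hU : Measurable (U H m D) := (hwb2 m hmH).2 D hD
  have hV : Measurable (V H m) := (hwb2 m hmH).1
  have hmceil : (⌈(8:ℝ)/ε^2⌉₊ + 1 : ℕ) ≤ m :=
    le_trans (le_trans (le_max_left _ _) (le_max_right _ _)) hm
  have hmceil2 : (⌈C/δ⌉₊ + 1 : ℕ) ≤ m :=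
    le_trans (le_trans (le_max_right _ _) (le_max_right _ _)) hm
  have hm8 : (8:ℝ)/ε^2 ≤ m := by
    calc (8:ℝ)/ε^2 ≤ ⌈(8:ℝ)/ε^2⌉₊ := Nat.le_ceil _
      _ ≤ m := by exact_mod_cast (by omega : (⌈(8:ℝ)/ε^2⌉₊ : ℕ) ≤ m)
  have hmpos : 0 < m := lt_of_lt_of_le hmH0 hmH
  have hmR : (0:ℝ) < m := by exact_mod_cast hmpos
  have hCm : C / m ≤ δ := by
    have h3 : C/δ < m := by
      calc C/δ ≤ ⌈C/δ⌉₊ := Nat.le_ceil _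
        _ < m := by exact_mod_cast (by omega : (⌈C/δ⌉₊ : ℕ) < m)
    rw [div_lt_iff₀ hδ0] at h3
    rw [div_le_iff₀ hmR]
    nlinarith
  set π1 := Measure.pi (fun _ : Fin m => D) with hπ1
  haveI : IsProbabilityMeasure π1 := by rw [hπ1]; infer_instance
  have hB := symmetrization D H hH hGmeas m hU hV hε0 hε1 hm8
  have hW := swap_bound D H hH d k hd m hmpos hV hε0
  -- numeric bound: 2 * Bnd ≤ C / m
  have hnum : 2 * (((2*m+1:ℕ):ℝ)^d * ((2*k)! : ℝ) * (m:ℝ)^k / ((m:ℝ)*ε/2)^(2*k))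
      ≤ C / m := by
    set F : ℝ := ((2*k)! : ℝ) with hF
    have hF0 : 0 < F := by rw [hF]; exact_mod_cast Nat.factorial_pos _
    set E : ℝ := (ε/2)^(2*k) with hE
    have hE0 : 0 < E := by rw [hE]; positivity
    have hEinv : (2/ε)^(2*k) = E⁻¹ := by
      rw [hE, ← inv_pow]
      congr 1
      rw [inv_div]
    have hsplit : ((m:ℝ)*ε/2)^(2*k) = (m:ℝ)^(k+1) * (m:ℝ)^d * E := by
      rw [show (m:ℝ)*ε/2 = (m:ℝ) * (ε/2) by ring, mul_pow, hE]
      congr 1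
      rw [← pow_add]
      congr 1
      omega
    have h2m1 : ((2*m+1:ℕ):ℝ)^d ≤ 3^d * (m:ℝ)^d := by
      rw [← mul_pow]
      refine pow_le_pow_left₀ (by positivity) ?_ d
      push_cast
      have h1m : (1:ℝ) ≤ m := by exact_mod_cast hmpos
      linarith
    rw [hsplit]
    have hmono : 2 * (((2*m+1:ℕ):ℝ)^d * F * (m:ℝ)^k / ((m:ℝ)^(k+1) * (m:ℝ)^d * E))
        ≤ 2 * ((3^d * (m:ℝ)^d) * F * (m:ℝ)^k / ((m:ℝ)^(k+1) * (m:ℝ)^d * E)) := by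
      gcongr
    refine le_trans hmono (le_of_eq ?_)
    rw [hC, hEinv]
    have hmk : (m:ℝ)^k ≠ 0 := by positivity
    have hmd : (m:ℝ)^d ≠ 0 := by positivity
    field_simp
    ring
  have hBfinal : π1 {z | ε < U H m D z} ≤ ENNReal.ofReal δ := by
    calc π1 {z | ε < U H m D z}
        ≤ 2 * (π1.prod π1) {p | ε/2 < V H m p} := hB
      _ ≤ 2 * ENNReal.ofReal (((2*m+1:ℕ):ℝ)^d * ((2*k)! : ℝ) * (m:ℝ)^k
            / ((m:ℝ)*ε/2)^(2*k)) := mul_le_mul_right hW 2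
      _ = ENNReal.ofReal (2 * (((2*m+1:ℕ):ℝ)^d * ((2*k)! : ℝ) * (m:ℝ)^k
            / ((m:ℝ)*ε/2)^(2*k))) := by
          rw [ENNReal.ofReal_mul (by norm_num)]
          norm_num
      _ ≤ ENNReal.ofReal (C/m) := ENNReal.ofReal_le_ofReal hnum
      _ ≤ ENNReal.ofReal δ := ENNReal.ofReal_le_ofReal hCm
  have hcompl : {z : Fin m → X × Bool | U H m D z ≤ ε} = {z | ε < U H m D z}ᶜ := by
    ext z
    simp [not_lt]
  rw [hcompl,
    measure_compl (measurableSet_lt measurable_const hU) (measure_ne_top _ _), measure_univ]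
  calc ENNReal.ofReal (1 - δ) = 1 - ENNReal.ofReal δ := by
        rw [ENNReal.ofReal_sub _ hδ0.le, ENNReal.ofReal_one]
    _ ≤ 1 - π1 {z | ε < U H m D z} := tsub_le_tsub_left hBfinal 1

end PAC
end

section
/- Let X be a non-empty set, let Σ_Z be a σ-algebra on Z = X × {0,1}, let 𝒟 be a set of probability measures on (Z, Σ_Z), and let H ⊆ {0,1}^X be a non-empty hypothesis space that is well-behaved with respect to 𝒟. If H has the uniform convergence property with respect to 𝒟, then every learning function for H that is NMSE is PAC with respect to 𝒟. -/
open MeasureTheory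

namespace PAC

variable {X : Type*}

/-- If a well-behaved hypothesis space has the uniform convergence property, then
every learning function for it that nearly minimizes the sample error is PAC. -/
theorem UCP_implies_NMSE_is_PAC
    {X : Type*} [Nonempty X] [MeasurableSpace (X × Bool)]
    (𝒟 : Set (Measure (X × Bool)))
    (h𝒟prob : ∀ D ∈ 𝒟, IsProbabilityMeasure D)
    (H : Set (X → Bool)) (hH : H.Nonempty)
    (hwb : WellBehaved H 𝒟)
    (hucp : UCP H 𝒟) :
    ∀ A : ∀ m : ℕ, (Fin m → X × Bool) → (X → Bool),
      IsLearningFunction H A → IsNMSE H A → IsPAC H 𝒟 A := by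
  intro A hA hnmse ε hε δ hδ
  obtain ⟨mH, hmH0, hUmeas, hconv⟩ := hucp
  have hε3 : ε / 3 ∈ Set.Ioo (0:ℝ) 1 := ⟨by linarith [hε.1], by linarith [hε.2, hε.1]⟩
  obtain ⟨m₀', hm₀'H, hconv'⟩ := hconv (ε/3) hε3 δ hδ
  obtain ⟨m₁, hm₁0, hnm⟩ := hnmse (ε/3) hε3
  refine ⟨max m₀' m₁, lt_of_lt_of_le hmH0 (le_trans hm₀'H (le_max_left _ _)), ?_⟩
  intro m hm D hD
  have hmH : mH ≤ m := le_trans hm₀'H (le_trans (le_max_left _ _) hm)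
  have hUm : Measurable (U H m D) := hUmeas m hmH D hD
  refine ⟨{z | U H m D z ≤ ε/3}, hUm measurableSet_Iic, ?_,
    hconv' m (le_trans (le_max_left _ _) hm) D hD⟩
  intro z hz
  simp only [Set.mem_setOf_eq] at hz ⊢
  haveI := h𝒟prob D hD
  haveI : Nonempty H := hH.to_subtype
  have hter : ∀ h : X → Bool, 0 ≤ trueError D h ∧ trueError D h ≤ 1 := by
    intro h
    refine ⟨ENNReal.toReal_nonneg, ?_⟩
    have h1 : D {z : X × Bool | h z.1 ≠ z.2} ≤ 1 := prob_le_one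
    have := ENNReal.toReal_mono (by norm_num) h1
    simpa [trueError] using this
  have hemp : ∀ (h : X → Bool), 0 ≤ empError z h ∧ empError z h ≤ 1 := by
    intro h
    unfold empError
    constructor
    · positivity
    · rcases Nat.eq_zero_or_pos m with hm0 | hm0
      · subst hm0; simp
      · rw [div_le_one (by exact_mod_cast hm0)]
        exact_mod_cast (Finset.card_filter_le _ _).trans (by simp)
  have hUbdd : BddAbove (Set.range fun h : H => |trueError D h.1 - empError z h.1|) := by
    refine ⟨1, ?_⟩
    rintro x ⟨h, rfl⟩
    have h1 := hter h.1
    have h2 := hemp h.1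
    rw [abs_sub_le_iff]
    constructor <;> linarith [h1.1, h1.2, h2.1, h2.2]
  have hkey : ∀ h ∈ H, |trueError D h - empError z h| ≤ ε/3 := by
    intro h hh
    exact le_trans (le_ciSup hUbdd (⟨h, hh⟩ : H)) hz
  have hbddB : BddBelow (Set.range fun h : H => empError z h.1) := by
    refine ⟨0, ?_⟩
    rintro x ⟨h, rfl⟩
    exact (hemp h.1).1
  have h1 : trueError D (A m z) ≤ empError z (A m z) + ε/3 := by
    have := hkey (A m z) (hA m z)
    rw [abs_sub_le_iff] at this
    linarith [this.1]
  have h2 : empError z (A m z) - empOpt z H ≤ ε/3 :=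
    hnm m (le_trans (le_max_right _ _) hm) z
  have h3 : empOpt z H - ε/3 ≤ optError D H := by
    refine le_ciInf fun h => ?_
    have hk := hkey h.1 h.2
    rw [abs_sub_le_iff] at hk
    have hle : empOpt z H ≤ empError z h.1 := ciInf_le hbddB h
    linarith [hk.2]
  linarith

end PAC
end

section
/- Let X be a non-empty set, let Σ_Z be a σ-algebra on Z = X × {0,1} containing all finite subsets of Z, and let 𝒟 be a set of probability measures on (Z, Σ_Z) containing all discrete uniform distributions. Let H ⊆ {0,1}^X be a non-empty hypothesis space with Γ(h) ∈ Σ_Z for every h ∈ H. If H is PAC learnable with respect to 𝒟, then H has finite VC dimension. -/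
open MeasureTheory

namespace PAC

variable {X : Type*}

namespace PACaux

open Finset

/-- Key combinatorial (no-free-lunch) lemma. -/
lemma exists_bad_f (n m : ℕ) (hm : 0 < m) (hnm : 2 * m ≤ n)
    (I : (Fin n → Bool) → (Fin m → Fin n) → Fin n → ℕ)
    (hI1 : ∀ f j k, I f j k ≤ 1)
    (hflip : ∀ f j k, k ∉ Set.range j →
      I f j k + I (Function.update f k (!f k)) j k = 1) :
    ∃ f : Fin n → Bool,
      n ^ m ≤ 8 * (Finset.univ.filter fun j : Fin m → Fin n =>
        n < 8 * ∑ k, I f j k).card := by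
  classical
  have hn : 0 < n := lt_of_lt_of_le (by omega) hnm
  -- key: for k outside the range of j, summing the flip pairs gives 2^n
  have key : ∀ (j : Fin m → Fin n) (k : Fin n), k ∉ Set.range j →
      2 * ∑ f : Fin n → Bool, I f j k = 2 ^ n := by
    intro j k hk
    set σ : (Fin n → Bool) → (Fin n → Bool) := fun f => Function.update f k (!f k) with hσdef
    have hσ : Function.Involutive σ := by
      intro f; funext k'
      rcases eq_or_ne k' k with rfl | h
      · simp [hσdef]
      · simp [hσdef, Function.update_of_ne h]
    have hswap : ∑ f : Fin n → Bool, I (σ f) j k = ∑ f : Fin n → Bool, I f j k :=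
      Fintype.sum_bijective σ hσ.bijective _ _ (fun f => rfl)
    calc 2 * ∑ f : Fin n → Bool, I f j k
        = ∑ f : Fin n → Bool, I f j k + ∑ f : Fin n → Bool, I (σ f) j k := by
          rw [hswap]; ring
      _ = ∑ f : Fin n → Bool, (I f j k + I (σ f) j k) := by rw [Finset.sum_add_distrib]
      _ = ∑ _f : Fin n → Bool, 1 := Finset.sum_congr rfl fun f _ => hflip f j k hk
      _ = 2 ^ n := by simp [Finset.card_univ]
  -- lower bound on the double sum, for each j
  have hsum : ∀ j : Fin m → Fin n,
      (n - m) * 2 ^ n ≤ 2 * ∑ f : Fin n → Bool, ∑ k, I f j k := by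
    intro j
    have hcomm : 2 * ∑ f : Fin n → Bool, ∑ k, I f j k
        = ∑ k : Fin n, 2 * ∑ f : Fin n → Bool, I f j k := by
      rw [Finset.sum_comm, Finset.mul_sum]
    rw [hcomm]
    have hcard : n - m ≤ (univ.filter fun k : Fin n => k ∉ Set.range j).card := by
      have h1 : (univ.filter fun k : Fin n => k ∈ Set.range j).card ≤ m := by
        have : (univ.filter fun k : Fin n => k ∈ Set.range j) = Finset.image j univ := by
          ext k; simp [Set.mem_range, eq_comm]
        rw [this]
        calc (Finset.image j univ).card ≤ (univ : Finset (Fin m)).card := Finset.card_image_le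
          _ = m := by simp
      have h2 := Finset.card_filter_add_card_filter_not
        (s := (univ : Finset (Fin n))) (p := fun k => k ∈ Set.range j)
      simp only [Finset.card_univ, Fintype.card_fin] at h2
      omega
    calc (n - m) * 2 ^ n
        ≤ (univ.filter fun k : Fin n => k ∉ Set.range j).card * 2 ^ n :=
          Nat.mul_le_mul_right _ hcard
      _ = ∑ k ∈ univ.filter fun k : Fin n => k ∉ Set.range j, 2 ^ n := by
          rw [Finset.sum_const, smul_eq_mul]
      _ ≤ ∑ k ∈ univ.filter fun k : Fin n => k ∉ Set.range j,
            2 * ∑ f : Fin n → Bool, I f j k := by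
          refine Finset.sum_le_sum fun k hk => ?_
          rw [key j k (Finset.mem_filter.1 hk).2]
      _ ≤ ∑ k : Fin n, 2 * ∑ f : Fin n → Bool, I f j k :=
          Finset.sum_le_sum_of_subset (Finset.filter_subset _ _)
  -- total lower bound
  have total : n ^ m * ((n - m) * 2 ^ n)
      ≤ 2 * ∑ f : Fin n → Bool, ∑ j : Fin m → Fin n, ∑ k, I f j k := by
    have hcomm : ∑ f : Fin n → Bool, ∑ j : Fin m → Fin n, ∑ k, I f j k
        = ∑ j : Fin m → Fin n, ∑ f : Fin n → Bool, ∑ k, I f j k := Finset.sum_comm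
    rw [hcomm, Finset.mul_sum]
    calc n ^ m * ((n - m) * 2 ^ n) = ∑ _j : Fin m → Fin n, (n - m) * 2 ^ n := by
          rw [Finset.sum_const, smul_eq_mul, Finset.card_univ]
          simp [Fintype.card_fun]
      _ ≤ ∑ j : Fin m → Fin n, 2 * ∑ f : Fin n → Bool, ∑ k, I f j k :=
          Finset.sum_le_sum fun j _ => hsum j
  -- pigeonhole: some f has large total error
  obtain ⟨f, hf⟩ : ∃ f : Fin n → Bool, n ^ m * n ≤ 4 * ∑ j : Fin m → Fin n, ∑ k, I f j k := by
    by_contra hcon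
    push_neg at hcon
    have hb : ∀ f : Fin n → Bool, 4 * ∑ j : Fin m → Fin n, ∑ k, I f j k ≤ n ^ m * n - 1 :=
      fun f => Nat.le_sub_one_of_lt (hcon f)
    have hs : ∑ f : Fin n → Bool, (4 * ∑ j : Fin m → Fin n, ∑ k, I f j k)
        ≤ 2 ^ n * (n ^ m * n - 1) := by
      calc ∑ f : Fin n → Bool, (4 * ∑ j : Fin m → Fin n, ∑ k, I f j k)
          ≤ ∑ _f : Fin n → Bool, (n ^ m * n - 1) := Finset.sum_le_sum fun f _ => hb f
        _ = 2 ^ n * (n ^ m * n - 1) := by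
            rw [Finset.sum_const, smul_eq_mul, Finset.card_univ]
            congr 1
            simp [Fintype.card_fun]
    rw [← Finset.mul_sum] at hs
    have h4 : 2 ^ n * (n ^ m * n) ≤ 4 * ∑ f : Fin n → Bool, ∑ j : Fin m → Fin n, ∑ k, I f j k := by
      calc 2 ^ n * (n ^ m * n) ≤ 2 ^ n * (n ^ m * (2 * (n - m))) := by
            apply Nat.mul_le_mul_left
            apply Nat.mul_le_mul_left
            omega
        _ = 2 * (n ^ m * ((n - m) * 2 ^ n)) := by ring
        _ ≤ 2 * (2 * ∑ f : Fin n → Bool, ∑ j : Fin m → Fin n, ∑ k, I f j k) :=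
            Nat.mul_le_mul_left _ total
        _ = 4 * ∑ f : Fin n → Bool, ∑ j : Fin m → Fin n, ∑ k, I f j k := by ring
    have hpos : 0 < n ^ m * n := Nat.mul_pos (Nat.pow_pos hn) hn
    have h2n : 0 < 2 ^ n := Nat.pow_pos (by norm_num)
    nlinarith [hs, h4, Nat.sub_add_cancel hpos]
  -- Markov step
  refine ⟨f, ?_⟩
  set T := univ.filter fun j : Fin m → Fin n => n < 8 * ∑ k, I f j k with hT
  have herr_le : ∀ j : Fin m → Fin n, ∑ k, I f j k ≤ n := by
    intro j
    calc ∑ k, I f j k ≤ ∑ _k : Fin n, 1 := Finset.sum_le_sum fun k _ => hI1 f j k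
      _ = n := by simp
  have hsplitT : ∑ j ∈ T, ∑ k, I f j k ≤ T.card * n := by
    calc ∑ j ∈ T, ∑ k, I f j k ≤ ∑ _j ∈ T, n := Finset.sum_le_sum fun j _ => herr_le j
      _ = T.card * n := by rw [Finset.sum_const, smul_eq_mul]
  have hsplitN : 8 * ∑ j ∈ univ.filter (fun j : Fin m → Fin n => ¬ (n < 8 * ∑ k, I f j k)),
      ∑ k, I f j k ≤ n ^ m * n := by
    rw [Finset.mul_sum]
    calc ∑ j ∈ univ.filter (fun j : Fin m → Fin n => ¬ (n < 8 * ∑ k, I f j k)),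
          8 * ∑ k, I f j k
        ≤ ∑ _j ∈ univ.filter (fun j : Fin m → Fin n => ¬ (n < 8 * ∑ k, I f j k)), n :=
          Finset.sum_le_sum fun j hj => by
            have := (Finset.mem_filter.1 hj).2; omega
      _ = (univ.filter (fun j : Fin m → Fin n => ¬ (n < 8 * ∑ k, I f j k))).card * n := by
          rw [Finset.sum_const, smul_eq_mul]
      _ ≤ n ^ m * n := by
          apply Nat.mul_le_mul_right
          calc _ ≤ (univ : Finset (Fin m → Fin n)).card := Finset.card_filter_le _ _
            _ = n ^ m := by rw [Finset.card_univ]; simp [Fintype.card_fun]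
  have hsplit : ∑ j ∈ T, ∑ k, I f j k
      + ∑ j ∈ univ.filter (fun j : Fin m → Fin n => ¬ (n < 8 * ∑ k, I f j k)), ∑ k, I f j k
      = ∑ j : Fin m → Fin n, ∑ k, I f j k := by
    rw [hT]
    exact Finset.sum_filter_add_sum_filter_not _ _ _
  have : n ^ m * n ≤ 8 * T.card * n := by nlinarith [hf, hsplitT, hsplitN, hsplit]
  have := Nat.le_of_mul_le_mul_right this hn
  omega

open scoped Classical in
lemma dirac_apply_ite {α : Type*} [MeasurableSpace α]
    (hfin : ∀ a : α, MeasurableSet ({a} : Set α)) (a : α) (s : Set α) :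
    Measure.dirac a s = if a ∈ s then 1 else 0 := by
  split
  · exact Measure.dirac_apply_of_mem ‹_›
  · refine le_antisymm ?_ zero_le
    calc Measure.dirac a s ≤ Measure.dirac a ({a}ᶜ) :=
          measure_mono (Set.subset_compl_singleton_iff.2 ‹_›)
      _ = 0 := by
          rw [Measure.dirac_apply' _ (hfin a).compl]
          simp

lemma uniform_apply {α : Type*} [MeasurableSpace α]
    (hfin : ∀ a : α, MeasurableSet ({a} : Set α)) (n : ℕ) (z : Fin n → α)
    (p : α → Prop) [DecidablePred p] :
    ((n : ENNReal)⁻¹ • ∑ j, Measure.dirac (z j)) {a | p a}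
      = (n : ENNReal)⁻¹ * ((Finset.univ.filter fun j => p (z j)).card : ENNReal) := by
  rw [Measure.smul_apply, Measure.finset_sum_apply, smul_eq_mul]
  congr 1
  rw [Finset.sum_congr rfl fun j _ => dirac_apply_ite hfin (z j) {a | p a}]
  refine Eq.trans (Finset.sum_congr rfl fun j _ => ?_)
    (Finset.sum_boole (p := fun j => p (z j)) (s := Finset.univ))
  simp [Set.mem_setOf_eq]

end PACaux

/-- If a hypothesis space (with measurable graphs) is PAC learnable with respect to
a set of distributions containing all discrete uniform distributions, then it has
finite VC dimension. -/
theorem PAC_implies_finiteVC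
    {X : Type*} [Nonempty X] [MeasurableSpace (X × Bool)]
    (hfin : ∀ z : X × Bool, MeasurableSet {z})
    (𝒟 : Set (Measure (X × Bool)))
    (h𝒟prob : ∀ D ∈ 𝒟, IsProbabilityMeasure D)
    (h𝒟unif : ∀ D : Measure (X × Bool), IsDiscreteUniform D → D ∈ 𝒟)
    (H : Set (X → Bool)) (hH : H.Nonempty)
    (hgraph : ∀ h ∈ H, MeasurableSet (graph h))
    (hpac : PACLearnable H 𝒟) :
    FiniteVC H := by
  classical
  by_contra hvc
  simp only [FiniteVC, not_exists] at hvc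
  push_neg at hvc
  obtain ⟨𝒜, -, hP⟩ := hpac
  obtain ⟨m, hm, hPm⟩ := hP (1/8) ⟨by norm_num, by norm_num⟩ (1/16) ⟨by norm_num, by norm_num⟩
  obtain ⟨A, hshatA, hcardA⟩ := hvc (2 * m)
  set n := A.card with hn
  have hnm : 2 * m ≤ n := le_of_lt hcardA
  have hn0 : 0 < n := by omega
  -- an enumeration of the shattered set
  set e := A.equivFin with he
  set x : Fin n → X := fun j => (e.symm j : X) with hx
  have hxmem : ∀ j, x j ∈ A := fun j => (e.symm j).2
  have hxinj : Function.Injective x := by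
    intro a b hab
    have : e.symm a = e.symm b := Subtype.ext hab
    exact e.symm.injective this
  have hshat : ∀ f : Fin n → Bool, ∃ h ∈ H, ∀ j, h (x j) = f j := by
    intro f
    obtain ⟨h, hh, hagree⟩ := hshatA (fun a => if ha : a ∈ A then f (e ⟨a, ha⟩) else false)
    refine ⟨h, hh, fun j => ?_⟩
    rw [hagree _ (hxmem j), dif_pos (hxmem j)]
    congr 1
    have : (⟨x j, hxmem j⟩ : {a // a ∈ A}) = e.symm j := Subtype.ext rfl
    rw [this, Equiv.apply_symm_apply]
  -- the adversarial discrete uniform distributions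
  set zf : (Fin n → Bool) → Fin n → X × Bool := fun f j => (x j, f j) with hzf
  set Df : (Fin n → Bool) → Measure (X × Bool) :=
    fun f => (n : ENNReal)⁻¹ • ∑ j, Measure.dirac (zf f j) with hDf
  have hDf𝒟 : ∀ f, Df f ∈ 𝒟 := fun f => h𝒟unif _ ⟨n, hn0, zf f, rfl⟩
  set φ : (Fin n → Bool) → (Fin m → Fin n) → (Fin m → X × Bool) :=
    fun f j i => zf f (j i) with hφ
  -- true error formula
  have hte : ∀ (f : Fin n → Bool) (g : X → Bool),
      trueError (Df f) g
        = (n : ℝ)⁻¹ * ((Finset.univ.filter fun k => g (x k) ≠ f k).card : ℝ) := by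
    intro f g
    have h1 : trueError (Df f) g = ((Df f) {z : X × Bool | g z.1 ≠ z.2}).toReal := rfl
    rw [h1, hDf]
    rw [PACaux.uniform_apply hfin n (zf f) (fun z : X × Bool => g z.1 ≠ z.2)]
    have h2 : (Finset.univ.filter fun j => g (zf f j).1 ≠ (zf f j).2)
        = Finset.univ.filter fun k => g (x k) ≠ f k := by
      apply Finset.filter_congr
      intro k _
      simp [hzf]
    rw [h2, ENNReal.toReal_mul]
    simp
  -- the optimal error is 0
  have hopt : ∀ f : Fin n → Bool, optError (Df f) H = 0 := by
    intro f
    obtain ⟨h₀, hh₀, hagree⟩ := hshat f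
    have h₀err : trueError (Df f) h₀ = 0 := by
      rw [hte]
      have : (Finset.univ.filter fun k => h₀ (x k) ≠ f k) = ∅ := by
        apply Finset.filter_false_of_mem
        intro k _
        simp [hagree k]
      rw [this]
      simp
    haveI : Nonempty ↥H := ⟨⟨h₀, hh₀⟩⟩
    have hbdd : BddBelow (Set.range fun h : H => trueError (Df f) h.1) :=
      ⟨0, by rintro _ ⟨h, rfl⟩; exact ENNReal.toReal_nonneg⟩
    refine le_antisymm ?_ (le_ciInf fun h => ENNReal.toReal_nonneg)
    calc optError (Df f) H ≤ trueError (Df f) h₀ := ciInf_le hbdd ⟨h₀, hh₀⟩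
      _ = 0 := h₀err
  -- the error indicator
  set I : (Fin n → Bool) → (Fin m → Fin n) → Fin n → ℕ :=
    fun f j k => if 𝒜 m (φ f j) (x k) ≠ f k then 1 else 0 with hI
  have hflip : ∀ f j k, k ∉ Set.range j →
      I f j k + I (Function.update f k (!f k)) j k = 1 := by
    intro f j k hk
    have hφeq : φ (Function.update f k (!f k)) j = φ f j := by
      funext i
      have hne : j i ≠ k := fun h => hk ⟨i, h⟩
      simp [hφ, hzf, Function.update_of_ne hne]
    simp only [hI, hφeq, Function.update_self]
    cases hb : 𝒜 m (φ f j) (x k) <;> cases hc : f k <;> simp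
  obtain ⟨f, hbig⟩ := PACaux.exists_bad_f n m hm hnm I
    (by intro f j k; simp only [hI]; split <;> omega) hflip
  -- the adversarial distribution
  set D := Df f with hD
  haveI : IsProbabilityMeasure D := h𝒟prob D (hDf𝒟 f)
  obtain ⟨C, hCmeas, hCsub, hCge⟩ := hPm m le_rfl D (hDf𝒟 f)
  set DP := Measure.pi (fun _ : Fin m => D) with hDP
  haveI : IsProbabilityMeasure DP := by rw [hDP]; infer_instance
  set T := Finset.univ.filter fun j : Fin m → Fin n => n < 8 * ∑ k, I f j k with hT
  set Bf : Finset (Fin m → X × Bool) := T.image (φ f) with hBf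
  have hφinj : Function.Injective (φ f) := by
    intro a b hab
    funext i
    have h1 := congrFun hab i
    simp only [hφ, hzf, Prod.mk.injEq] at h1
    exact hxinj h1.1
  -- every sample in Bf is bad
  have hBbad : ∀ w ∈ Bf, (1/8 : ℝ) < trueError D (𝒜 m w) - optError D H := by
    intro w hw
    obtain ⟨j, hjT, rfl⟩ := Finset.mem_image.1 hw
    rw [hD, hopt f, sub_zero, hte]
    have hjT' : n < 8 * ∑ k, I f j k := (Finset.mem_filter.1 hjT).2
    have hcard : ∑ k, I f j k = (Finset.univ.filter fun k => 𝒜 m (φ f j) (x k) ≠ f k).card := by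
      rw [Finset.card_filter]
    rw [hcard] at hjT'
    have hnR : (0:ℝ) < n := by exact_mod_cast hn0
    have hcast : (n : ℝ)
        < 8 * ((Finset.univ.filter fun k => 𝒜 m (φ f j) (x k) ≠ f k).card : ℝ) := by
      exact_mod_cast hjT'
    rw [inv_mul_eq_div, lt_div_iff₀ hnR]
    linarith
  -- C and Bf are disjoint
  have hdisj : Disjoint C (↑Bf : Set (Fin m → X × Bool)) := by
    rw [Set.disjoint_left]
    intro w hwC hwB
    have h1 := hCsub hwC
    have h2 := hBbad w hwB
    simp only [Set.mem_setOf_eq] at h1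
    linarith
  -- Bf is measurable
  have hsing : ∀ w : Fin m → X × Bool, MeasurableSet ({w} : Set (Fin m → X × Bool)) := by
    intro w
    rw [← Set.univ_pi_singleton]
    exact MeasurableSet.univ_pi fun i => hfin (w i)
  have hBuni : (↑Bf : Set (Fin m → X × Bool)) = ⋃ w ∈ Bf, {w} := by
    ext w
    simp
  have hBmeas : MeasurableSet (↑Bf : Set (Fin m → X × Bool)) := by
    rw [hBuni]
    exact Bf.measurableSet_biUnion fun w _ => hsing w
  -- lower bound on the measure of Bf
  have hDP_B : ENNReal.ofReal (1/8 : ℝ) ≤ DP ↑Bf := by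
    have hpd : (↑Bf : Set (Fin m → X × Bool)).PairwiseDisjoint
        (fun w => ({w} : Set (Fin m → X × Bool))) := by
      intro a _ b _ hab
      simpa using hab
    rw [hBuni, measure_biUnion_finset hpd fun w _ => hsing w]
    have hsingle : ∀ w ∈ Bf, ((n : ENNReal) ^ m)⁻¹ ≤ DP {w} := by
      intro w hw
      obtain ⟨j, hjT, rfl⟩ := Finset.mem_image.1 hw
      rw [hDP, show ({φ f j} : Set (Fin m → X × Bool))
            = Set.pi Set.univ (fun i => {φ f j i}) from (Set.univ_pi_singleton _).symm,
          Measure.pi_pi]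
      calc ((n : ENNReal) ^ m)⁻¹ = ∏ _i : Fin m, (n : ENNReal)⁻¹ := by
            rw [Finset.prod_const, Finset.card_univ, Fintype.card_fin, ENNReal.inv_pow]
        _ ≤ ∏ i : Fin m, D {φ f j i} := by
            refine Finset.prod_le_prod' fun i _ => ?_
            rw [hD, hDf, show ({φ f j i} : Set (X × Bool)) = {a | a = φ f j i} by
              ext a; simp [Set.mem_singleton_iff]]
            rw [PACaux.uniform_apply hfin n (zf f) (fun a : X × Bool => a = φ f j i)]
            refine le_trans (le_of_eq (mul_one _).symm) (mul_le_mul_right ?_ _)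
            rw [Nat.one_le_cast]
            refine Nat.one_le_iff_ne_zero.2 (Finset.card_ne_zero_of_mem (a := j i) ?_)
            simp [hφ]
    have hcardBf : Bf.card = T.card := Finset.card_image_of_injective _ hφinj
    calc ENNReal.ofReal (1/8 : ℝ) ≤ (T.card : ENNReal) * ((n : ENNReal) ^ m)⁻¹ := by
          have h8 : ((n : ENNReal) ^ m) ≤ 8 * (T.card : ENNReal) := by
            exact_mod_cast hbig
          have hofr : ENNReal.ofReal (1/8 : ℝ) ≤ (8 : ENNReal)⁻¹ := by
            rw [show (1/8 : ℝ) = (8 : ℝ)⁻¹ by norm_num,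
              ENNReal.ofReal_inv_of_pos (by norm_num)]
            norm_num
          refine le_trans hofr ?_
          rw [← div_eq_mul_inv]
          rw [ENNReal.le_div_iff_mul_le (Or.inl ?h0) (Or.inl ?htop)]
          case h0 => exact pow_ne_zero m (Nat.cast_ne_zero.2 hn0.ne')
          case htop => exact ENNReal.pow_ne_top (ENNReal.natCast_ne_top n)
          calc (8 : ENNReal)⁻¹ * (n : ENNReal) ^ m ≤ (8 : ENNReal)⁻¹ * (8 * T.card) :=
                mul_le_mul_right h8 _
            _ = T.card := by
                rw [← mul_assoc, ENNReal.inv_mul_cancel (by norm_num) (by norm_num), one_mul]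
      _ = ∑ _w ∈ Bf, ((n : ENNReal) ^ m)⁻¹ := by
          rw [Finset.sum_const, hcardBf, nsmul_eq_mul]
      _ ≤ ∑ w ∈ Bf, DP {w} := Finset.sum_le_sum hsingle
  -- final contradiction
  have hunion : DP C + DP ↑Bf ≤ 1 := by
    rw [← measure_union hdisj hBmeas]
    exact prob_le_one
  have hfinal : ENNReal.ofReal ((1 - 1/16 : ℝ)) + ENNReal.ofReal (1/8 : ℝ) ≤ 1 :=
    le_trans (add_le_add hCge hDP_B) hunion
  rw [← ENNReal.ofReal_add (by norm_num) (by norm_num), ← ENNReal.ofReal_one] at hfinal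
  have := (ENNReal.ofReal_le_ofReal_iff (by norm_num)).1 hfinal
  norm_num at this



end PAC
end

section
/- Let L be a first-order language and let M be an L-structure with domain M. Then the following are equivalent: (1) M has NIP (every L-formula has NIP over M); (2) for every n ∈ ℕ, every non-empty definable set X ⊆ M^n and every L-formula φ(x_1,…,x_n; p_1,…,p_ℓ), the hypothesis space H^φ_X = {h↾X : h ∈ H^φ} has finite VC dimension; (3) for every L-formula φ(x_1,…,x_n; p_1,…,p_ℓ), the hypothesis space H^φ has finite VC dimension. -/
open FirstOrder

namespace NIPVC

/-- `H` shatters the finite set `A ⊆ Y`. -/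
def Shatters {Y : Type*} (H : Set (Y → Bool)) (A : Finset Y) : Prop :=
  ∀ f : Y → Bool, ∃ h ∈ H, ∀ x ∈ A, h x = f x

/-- `vc(H) < ∞`. -/
def FiniteVC {Y : Type*} (H : Set (Y → Bool)) : Prop :=
  ∃ d : ℕ, ∀ A : Finset Y, Shatters H A → A.card ≤ d

variable {L : FirstOrder.Language} {M : Type*} [Nonempty M] [L.Structure M]

/-- The hypothesis space `H^φ = {1_{φ(M;w)} : w ∈ M^ℓ}` of a partitioned formula
`φ(x₁,…,xₙ; p₁,…,p_ℓ)`, as a set of `{0,1}`-valued functions on `Mⁿ`. -/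
def HypSpace (M : Type*) [L.Structure M] {n ℓ : ℕ}
    (φ : L.Formula (Fin n ⊕ Fin ℓ)) : Set ((Fin n → M) → Bool) :=
  {h | ∃ w : Fin ℓ → M, ∀ a : Fin n → M, (h a = true ↔ φ.Realize (Sum.elim a w))}

/-- The restricted hypothesis space `H^φ_X = {h↾X : h ∈ H^φ}`. -/
def HypSpaceRestrict (M : Type*) [L.Structure M] {n ℓ : ℕ}
    (φ : L.Formula (Fin n ⊕ Fin ℓ)) (Xs : Set (Fin n → M)) :
    Set (↥Xs → Bool) :=
  {g | ∃ h ∈ HypSpace M φ, ∀ x : ↥Xs, g x = h ↑x}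

/-- The partitioned formula `φ(x; p)` has NIP over `M`. -/
def FormulaNIP (M : Type*) [L.Structure M] {n ℓ : ℕ}
    (φ : L.Formula (Fin n ⊕ Fin ℓ)) : Prop :=
  ∃ m : ℕ, 0 < m ∧
    ∀ (a : Fin m → Fin n → M) (w : Finset (Fin m) → Fin ℓ → M),
      ∃ J : Finset (Fin m),
        ¬ ((∀ i ∈ J, φ.Realize (Sum.elim (a i) (w J))) ∧
          (∀ i ∉ J, ¬ φ.Realize (Sum.elim (a i) (w J))))

/-- A set `A ⊆ Mⁿ` is definable over `M` (with parameters). -/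
def IsDefinableSet (L : FirstOrder.Language) (M : Type*) [L.Structure M] (n : ℕ)
    (A : Set (Fin n → M)) : Prop :=
  ∃ (k : ℕ) (ψ : L.Formula (Fin n ⊕ Fin k)) (w : Fin k → M),
    A = {a | ψ.Realize (Sum.elim a w)}

-- auxiliary lemmas

lemma nip_of_finiteVC {n ℓ : ℕ} (φ : L.Formula (Fin n ⊕ Fin ℓ))
    (h : FiniteVC (HypSpace M φ)) : FormulaNIP M φ := by
  classical
  obtain ⟨d, hd⟩ := h
  refine ⟨d + 1, Nat.succ_pos d, ?_⟩
  intro a w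
  by_contra hcon
  push_neg at hcon
  have hall : ∀ J : Finset (Fin (d + 1)),
      (∀ i ∈ J, φ.Realize (Sum.elim (a i) (w J))) ∧
      (∀ i ∉ J, ¬ φ.Realize (Sum.elim (a i) (w J))) := hcon
  have hinj : Function.Injective a := by
    intro i j hij
    by_contra hne
    have h1 := (hall {i}).1 i (Finset.mem_singleton_self i)
    have h2 := (hall {i}).2 j (by simp [Finset.mem_singleton, Ne.symm, hne])
    rw [hij] at h1
    exact h2 h1
  set A : Finset (Fin n → M) := Finset.image a Finset.univ with hA
  have hshat : Shatters (HypSpace M φ) A := by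
    intro f
    set J : Finset (Fin (d + 1)) := Finset.univ.filter (fun i => f (a i) = true) with hJdef
    refine ⟨fun x => decide (φ.Realize (Sum.elim x (w J))), ⟨w J, fun x => by simp⟩, ?_⟩
    intro x hx
    obtain ⟨i, _, rfl⟩ := Finset.mem_image.mp hx
    by_cases hf : f (a i) = true
    · have hiJ : i ∈ J := by simp [hJdef, hf]
      simp [(hall J).1 i hiJ, hf]
    · have hiJ : i ∉ J := by simp [hJdef, hf]
      simp only [Bool.not_eq_true] at hf
      simp [(hall J).2 i hiJ, hf]
  have hcard : A.card = d + 1 := by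
    rw [hA, Finset.card_image_of_injective _ hinj, Finset.card_univ, Fintype.card_fin]
  have := hd A hshat
  omega

lemma finiteVC_of_nip {n ℓ : ℕ} (φ : L.Formula (Fin n ⊕ Fin ℓ))
    (h : FormulaNIP M φ) : FiniteVC (HypSpace M φ) := by
  classical
  obtain ⟨m, hm, H⟩ := h
  refine ⟨m, fun A hshat => ?_⟩
  by_contra hcard
  push_neg at hcard
  have hle : m ≤ A.card := le_of_lt (lt_of_lt_of_le (Nat.lt_succ_self m) hcard)
  obtain ⟨B, hBA, hBcard⟩ := Finset.exists_subset_card_eq hle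
  set a : Fin m → (Fin n → M) := fun i => (B.equivFin.symm ⟨i, by omega⟩ : _) with ha
  have hainj : Function.Injective a := by
    intro i j hij
    have := B.equivFin.symm.injective (Subtype.ext hij)
    simpa [Fin.ext_iff] using congrArg Fin.val this
  have hamem : ∀ i, a i ∈ A := fun i => hBA (B.equivFin.symm ⟨i, by omega⟩).2
  have key : ∀ J : Finset (Fin m), ∃ w : Fin ℓ → M,
      (∀ i ∈ J, φ.Realize (Sum.elim (a i) w)) ∧
      (∀ i ∉ J, ¬ φ.Realize (Sum.elim (a i) w)) := by
    intro J
    obtain ⟨hh, ⟨w, hw⟩, hagree⟩ := hshat (fun x => decide (∃ i ∈ J, a i = x))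
    refine ⟨w, fun i hi => ?_, fun i hi => ?_⟩
    · have : hh (a i) = true := by
        rw [hagree (a i) (hamem i)]
        simp only [decide_eq_true_eq]
        exact ⟨i, hi, rfl⟩
      exact (hw (a i)).mp this
    · have : hh (a i) = false := by
        rw [hagree (a i) (hamem i)]
        simp only [decide_eq_false_iff_not]
        rintro ⟨j, hj, hji⟩
        exact hi (hainj hji ▸ hj)
      intro hr
      rw [(hw (a i)).mpr hr] at this
      simp at this
  choose w hw1 hw2 using key
  obtain ⟨J, hJ⟩ := H a w
  exact hJ ⟨hw1 J, hw2 J⟩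

lemma finiteVC_restrict {n ℓ : ℕ} (φ : L.Formula (Fin n ⊕ Fin ℓ))
    (Xs : Set (Fin n → M)) (h : FiniteVC (HypSpace M φ)) :
    FiniteVC (HypSpaceRestrict M φ Xs) := by
  classical
  obtain ⟨d, hd⟩ := h
  refine ⟨d, fun A hshat => ?_⟩
  have hshat' : Shatters (HypSpace M φ) (A.image (Subtype.val)) := by
    intro f'
    obtain ⟨g, ⟨hh, hhmem, hgh⟩, hagree⟩ := hshat (fun y => f' ↑y)
    refine ⟨hh, hhmem, ?_⟩
    intro x hx
    obtain ⟨y, hy, rfl⟩ := Finset.mem_image.mp hx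
    rw [← hgh y, hagree y hy]
  have := hd _ hshat'
  rwa [Finset.card_image_of_injective _ Subtype.coe_injective] at this

/-- The following are equivalent: (1) `M` has NIP; (2) every hypothesis space
`H^φ_X` over a non-empty definable instance space has finite VC dimension;
(3) every hypothesis space `H^φ` has finite VC dimension. -/
theorem nip_tfae (L : FirstOrder.Language) (M : Type*) [Nonempty M] [L.Structure M] :
    List.TFAE
      [ (∀ (n ℓ : ℕ) (φ : L.Formula (Fin n ⊕ Fin ℓ)), FormulaNIP M φ),
        (∀ (n : ℕ) (Xs : Set (Fin n → M)), Xs.Nonempty → IsDefinableSet L M n Xs →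
          ∀ (ℓ : ℕ) (φ : L.Formula (Fin n ⊕ Fin ℓ)),
            FiniteVC (HypSpaceRestrict M φ Xs)),
        (∀ (n ℓ : ℕ) (φ : L.Formula (Fin n ⊕ Fin ℓ)), FiniteVC (HypSpace M φ)) ] := by
  classical
  tfae_have 1 → 3 := fun h n ℓ φ => finiteVC_of_nip φ (h n ℓ φ)
  tfae_have 3 → 1 := fun h n ℓ φ => nip_of_finiteVC φ (h n ℓ φ)
  tfae_have 3 → 2 := fun h n Xs _ _ ℓ φ => finiteVC_restrict φ Xs (h n ℓ φ)
  tfae_have 2 → 3 := by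
    intro h n ℓ φ
    have hdef : IsDefinableSet L M n (Set.univ) :=
      ⟨0, ⊤, Fin.elim0, by ext a; simp⟩
    have hne : (Set.univ : Set (Fin n → M)).Nonempty := Set.univ_nonempty
    obtain ⟨d, hd⟩ := h n Set.univ hne hdef ℓ φ
    refine ⟨d, fun A hshat => ?_⟩
    set e : (Fin n → M) → ↥(Set.univ : Set (Fin n → M)) := fun x => ⟨x, trivial⟩ with he
    have heinj : Function.Injective e := fun x y hxy => congrArg Subtype.val hxy
    have hshat' : Shatters (HypSpaceRestrict M φ Set.univ) (A.image e) := by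
      intro f
      obtain ⟨hh, hhmem, hagree⟩ := hshat (fun x => f (e x))
      refine ⟨fun y => hh ↑y, ⟨hh, hhmem, fun _ => rfl⟩, ?_⟩
      intro y hy
      obtain ⟨x, hx, rfl⟩ := Finset.mem_image.mp hy
      exact hagree x hx
    have := hd _ hshat'
    rwa [Finset.card_image_of_injective _ heinj] at this
  tfae_finish

end NIPVC
end

section
/- Let L be a first-order language expanding the language of ordered rings, let R be an o-minimal L-expansion of the ordered field of real numbers, let n, ℓ ∈ ℕ, let φ(x_1,…,x_n; p_1,…,p_ℓ) be an L-formula and let w ∈ ℝ^ℓ. Then the definable set φ(R; w) = {a ∈ ℝ^n : R ⊨ φ(a; w)} is a Borel subset of ℝ^n. -/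
open FirstOrder

namespace OMin

variable (L : FirstOrder.Language) [L.Structure ℝ]

/-- A set `A ⊆ ℝⁿ` is definable (with parameters) over the `L`-structure `ℝ`. -/
def RealDefinable (n : ℕ) (A : Set (Fin n → ℝ)) : Prop :=
  ∃ (k : ℕ) (ψ : L.Formula (Fin n ⊕ Fin k)) (w : Fin k → ℝ),
    A = {a | ψ.Realize (Sum.elim a w)}

/-- The `L`-structure on `ℝ` is an o-minimal expansion of the ordered field of
real numbers: the order, addition and multiplication are (parameter-free)
definable, and every definable subset of `ℝ` is a finite union of points and
open intervals (with endpoints in `ℝ ∪ {±∞}`). -/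
def IsOMinimalRealExpansion : Prop :=
  (∃ φ : L.Formula (Fin 2), ∀ v : Fin 2 → ℝ, φ.Realize v ↔ v 0 < v 1) ∧
  (∃ φ : L.Formula (Fin 3), ∀ v : Fin 3 → ℝ, φ.Realize v ↔ v 0 + v 1 = v 2) ∧
  (∃ φ : L.Formula (Fin 3), ∀ v : Fin 3 → ℝ, φ.Realize v ↔ v 0 * v 1 = v 2) ∧
  (∀ A : Set (Fin 1 → ℝ), RealDefinable L 1 A →
    ∃ (F : Finset ℝ) (s : Finset (EReal × EReal)),
      (fun v : Fin 1 → ℝ => v 0) '' A =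
        ↑F ∪ ⋃ p ∈ s, {x : ℝ | p.1 < (x : EReal) ∧ (x : EReal) < p.2})


section Aux

open FirstOrder.Language Set

variable {L}

def Def (α : Type) (S : Set (α → ℝ)) : Prop :=
  ∃ ψ : L.Formula (α ⊕ ℝ), S = {a | ψ.Realize (Sum.elim a id)}

/-- interior membership via open intervals -/
lemma mem_interior_real {T : Set ℝ} {y : ℝ} :
    y ∈ interior T ↔ ∃ p q : ℝ, p < y ∧ y < q ∧ Set.Ioo p q ⊆ T := by
  rw [mem_interior_iff_mem_nhds, mem_nhds_iff_exists_Ioo_subset]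
  constructor
  · rintro ⟨l, u, hy, hsub⟩; exact ⟨l, u, hy.1, hy.2, hsub⟩
  · rintro ⟨p, q, h1, h2, hsub⟩; exact ⟨p, q, ⟨h1, h2⟩, hsub⟩

lemma mem_interior_rat {T : Set ℝ} {y : ℝ} :
    y ∈ interior T ↔ ∃ p q : ℚ, (p : ℝ) < y ∧ y < q ∧ Set.Ioo (p : ℝ) q ⊆ T := by
  rw [mem_interior_real]
  constructor
  · rintro ⟨p, q, h1, h2, hsub⟩
    obtain ⟨p', hp1, hp2⟩ := exists_rat_btwn h1
    obtain ⟨q', hq1, hq2⟩ := exists_rat_btwn h2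
    exact ⟨p', q', hp2, hq1, fun z hz => hsub ⟨hp1.trans hz.1, hz.2.trans hq2⟩⟩
  · rintro ⟨p, q, h1, h2, hsub⟩; exact ⟨p, q, h1, h2, hsub⟩

lemma cover_iff {T : Set ℝ} (hT : T.Finite) (k : ℕ) :
    (∃ z : Fin k → ℝ, T ⊆ Set.range z) ↔ T.ncard ≤ k := by
  constructor
  · rintro ⟨z, hz⟩
    refine (Set.ncard_le_ncard hz (Set.finite_range z)).trans ?_
    rw [← Set.image_univ]
    exact (Set.ncard_image_le Set.finite_univ).trans (by simp [Set.ncard_univ])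
  · intro hk
    obtain ⟨t, rfl⟩ := hT.exists_finset_coe
    rw [Set.ncard_coe_finset] at hk
    refine ⟨fun j => t.toList.getD j 0, ?_⟩
    intro u hu
    have hul : u ∈ t.toList := Finset.mem_toList.2 hu
    have hidx : t.toList.idxOf u < t.toList.length := List.idxOf_lt_length_iff.2 hul
    have hlen : t.toList.length = t.card := Finset.length_toList t
    have hk' : t.toList.idxOf u < k := by omega
    refine ⟨⟨t.toList.idxOf u, hk'⟩, ?_⟩
    show t.toList.getD (t.toList.idxOf u) 0 = u
    rw [List.getD_eq_getElem _ _ hidx]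
    exact List.getElem_idxOf hidx


namespace Def

theorem compl {α : Type} {S : Set (α → ℝ)} (h : Def (L := L) α S) : Def (L := L) α Sᶜ := by
  obtain ⟨ψ, rfl⟩ := h
  exact ⟨ψ.not, by ext a; simp [Formula.realize_not]⟩

theorem inter {α : Type} {S T : Set (α → ℝ)} (hS : Def (L := L) α S) (hT : Def (L := L) α T) :
    Def (L := L) α (S ∩ T) := by
  obtain ⟨ψ, rfl⟩ := hS; obtain ⟨χ, rfl⟩ := hT
  exact ⟨ψ ⊓ χ, by ext a; simp [Formula.realize_inf]⟩

theorem union {α : Type} {S T : Set (α → ℝ)} (hS : Def (L := L) α S) (hT : Def (L := L) α T) :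
    Def (L := L) α (S ∪ T) := by
  obtain ⟨ψ, rfl⟩ := hS; obtain ⟨χ, rfl⟩ := hT
  exact ⟨ψ ⊔ χ, by ext a; simp [Formula.realize_sup]⟩

theorem diff {α : Type} {S T : Set (α → ℝ)} (hS : Def (L := L) α S) (hT : Def (L := L) α T) :
    Def (L := L) α (S \ T) := hS.inter hT.compl

theorem relabel {α β : Type} {S : Set (α → ℝ)} (h : Def (L := L) α S) (f : α → β) :
    Def (L := L) β {b | b ∘ f ∈ S} := by
  obtain ⟨ψ, rfl⟩ := h
  refine ⟨ψ.relabel (Sum.map f id), ?_⟩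
  ext b
  have hv : Sum.elim b id ∘ Sum.map f id = Sum.elim (b ∘ f) id := by
    funext x; cases x <;> rfl
  simp only [Set.mem_setOf_eq, Formula.realize_relabel, hv]

theorem fix {α β : Type} {S : Set (α ⊕ β → ℝ)} (h : Def (L := L) (α ⊕ β) S) (c : β → ℝ) :
    Def (L := L) α {a | Sum.elim a c ∈ S} := by
  obtain ⟨ψ, rfl⟩ := h
  refine ⟨ψ.relabel (Sum.elim (Sum.elim Sum.inl (Sum.inr ∘ c)) Sum.inr), ?_⟩
  ext a
  have hv : Sum.elim a id ∘ Sum.elim (Sum.elim Sum.inl (Sum.inr ∘ c)) Sum.inr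
      = Sum.elim (Sum.elim a c) id := by
    funext x; rcases x with (x | x) | x <;> rfl
  simp only [Set.mem_setOf_eq, Formula.realize_relabel, hv]

theorem exs {α β : Type} [Finite β] {S : Set (α ⊕ β → ℝ)} (h : Def (L := L) (α ⊕ β) S) :
    Def (L := L) α {a | ∃ b : β → ℝ, Sum.elim a b ∈ S} := by
  obtain ⟨ψ, rfl⟩ := h
  refine ⟨Formula.iExs β (ψ.relabel (Sum.elim (Sum.elim (Sum.inl ∘ Sum.inl) Sum.inr) (Sum.inl ∘ Sum.inr))), ?_⟩
  ext a
  rw [Set.mem_setOf_eq, Set.mem_setOf_eq, Formula.realize_iExs]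
  have hv : ∀ b : β → ℝ, (fun x => Sum.elim (Sum.elim a id) b
      (Sum.elim (Sum.elim (Sum.inl ∘ Sum.inl) Sum.inr) (Sum.inl ∘ Sum.inr) x))
      = Sum.elim (Sum.elim a b) id := by
    intro b; funext x; rcases x with (x | x) | x <;> rfl
  exact exists_congr fun b => by
    rw [Formula.realize_relabel, show (Sum.elim (Sum.elim a id) b ∘
      Sum.elim (Sum.elim (Sum.inl ∘ Sum.inl) Sum.inr) (Sum.inl ∘ Sum.inr))
        = Sum.elim (Sum.elim a b) id from hv b]; rfl

theorem alls {α β : Type} [Finite β] {S : Set (α ⊕ β → ℝ)} (h : Def (L := L) (α ⊕ β) S) :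
    Def (L := L) α {a | ∀ b : β → ℝ, Sum.elim a b ∈ S} := by
  have := h.compl.exs.compl
  convert this using 1
  ext a; simp

end Def

section Conv
theorem def_of_formula {n ℓ : ℕ} (φ : L.Formula (Fin n ⊕ Fin ℓ)) (w : Fin ℓ → ℝ) :
    Def (L := L) (Fin n) {a | φ.Realize (Sum.elim a w)} := by
  refine ⟨φ.relabel (Sum.map id w), ?_⟩
  ext a
  have hv : Sum.elim a id ∘ Sum.map id w = Sum.elim a w := by funext x; cases x <;> rfl
  simp only [Set.mem_setOf_eq, Formula.realize_relabel, hv]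

theorem Def.toRealDefinable {n : ℕ} {A : Set (Fin n → ℝ)} (h : Def (L := L) (Fin n) A) :
    RealDefinable L n A := by
  classical
  obtain ⟨ψ, rfl⟩ := h
  let s : Finset (Fin n ⊕ ℝ) := ψ.freeVarFinset
  have hsub : (↑s : Set (Fin n ⊕ ℝ)) ⊆ ↑s := subset_refl _
  let ψ₀ : L.Formula ↥(↑s : Set (Fin n ⊕ ℝ)) := ψ.restrictFreeVar (Set.inclusion hsub)
  let e : ↥s ≃ Fin s.card := s.equivFin
  let eFun : ↥(↑s : Set (Fin n ⊕ ℝ)) → Fin s.card := fun x => e ⟨x.1, x.2⟩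
  let g : ↥(↑s : Set (Fin n ⊕ ℝ)) → Fin n ⊕ Fin s.card :=
    fun x => Sum.map id (fun _ => eFun x) x.1
  let w : Fin s.card → ℝ := fun j => Sum.elim (fun _ => (0 : ℝ)) id (e.symm j).1
  refine ⟨s.card, Formula.relabel g ψ₀, w, ?_⟩
  ext a
  have hv : Sum.elim a w ∘ g = Sum.elim a id ∘ (Subtype.val) := by
    funext x
    obtain ⟨xv, hxm⟩ := x
    rcases xv with i | r
    · rfl
    · show w (eFun ⟨Sum.inr r, hxm⟩) = r
      have : e.symm (e ⟨Sum.inr r, hxm⟩) = ⟨Sum.inr r, hxm⟩ := e.symm_apply_apply _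
      simp only [w, eFun, this]
      rfl
  simp only [Set.mem_setOf_eq, Formula.realize_relabel, hv]
  have h2 : ψ₀.Realize (Sum.elim a id ∘ Subtype.val) ↔ ψ.Realize (Sum.elim a id) := by
    unfold Formula.Realize
    exact BoundedFormula.realize_restrictFreeVar' hsub
  exact h2.symm


end Conv

theorem def_lt {α : Type} (hlt : ∃ φ : L.Formula (Fin 2), ∀ v : Fin 2 → ℝ,
    φ.Realize v ↔ v 0 < v 1) (i j : α) : Def (L := L) α {v | v i < v j} := by
  obtain ⟨φ, hφ⟩ := hlt
  refine ⟨(φ.relabel (fun t => if t = 0 then i else j)).relabel (Sum.inl), ?_⟩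
  ext v
  simp only [Set.mem_setOf_eq, Formula.realize_relabel]
  rw [hφ]
  simp


section Constructions
variable {n : ℕ}

theorem Def.univ {α : Type} : Def (L := L) α (Set.univ : Set (α → ℝ)) :=
  ⟨⊤, by ext a; simp [Formula.Realize, BoundedFormula.realize_top]⟩

theorem Def.biInter {α ι : Type} {f : ι → Set (α → ℝ)} (s : Finset ι)
    (h : ∀ i, Def (L := L) α (f i)) : Def (L := L) α (⋂ i ∈ s, f i) := by
  classical
  induction s using Finset.induction_on with
  | empty => simpa using Def.univ
  | insert _ _ hx ih => rw [Finset.set_biInter_insert]; exact (h _).inter ih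

theorem Def.iInter {α ι : Type} [Fintype ι] {f : ι → Set (α → ℝ)}
    (h : ∀ i, Def (L := L) α (f i)) : Def (L := L) α (⋂ i, f i) := by
  have := Def.biInter (L := L) (Finset.univ : Finset ι) h
  simpa using this

theorem def_ne {α : Type} (hlt : ∃ φ : L.Formula (Fin 2), ∀ v : Fin 2 → ℝ,
    φ.Realize v ↔ v 0 < v 1) (i j : α) : Def (L := L) α {v | v i ≠ v j} := by
  have := (def_lt hlt i j).union (def_lt hlt j i)
  convert this using 1
  ext v
  simp only [Set.mem_setOf_eq, Set.mem_union]
  exact ⟨fun h => h.lt_or_gt, fun h => h.elim ne_of_lt ne_of_gt⟩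

theorem Def.at2 {n : ℕ} {P : (Fin n → ℝ) → ℝ → Prop}
    (h : Def (L := L) (Fin n ⊕ Fin 1) {v | P (v ∘ Sum.inl) (v (Sum.inr 0))})
    {β : Type} (g : Fin n → β) (t : β) : Def (L := L) β {w | P (w ∘ g) (w t)} :=
  h.relabel (Sum.elim g fun _ => t)


section Fib

variable {n : ℕ}

def fib (S : Set (Fin (n + 1) → ℝ)) (x : Fin n → ℝ) : Set ℝ := {y | Fin.snoc x y ∈ S}

def Ebd (S : Set (Fin (n + 1) → ℝ)) (x : Fin n → ℝ) : Set ℝ :=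
  fib S x \ interior (fib S x)

def ptP (S : Set (Fin (n + 1) → ℝ)) (i : ℕ) (x : Fin n → ℝ) (y : ℝ) : Prop :=
  y ∈ Ebd S x ∧ (Ebd S x ∩ Set.Iio y).ncard = i

theorem Def.snocRel {S : Set (Fin (n + 1) → ℝ)} (hS : Def (L := L) (Fin (n + 1)) S)
    {α : Type} (xv : Fin n → α) (yv : α) :
    Def (L := L) α {b | Fin.snoc (b ∘ xv) (b yv) ∈ S} := by
  have h := hS.relabel (Fin.lastCases yv xv)
  have hfun : ∀ b : α → ℝ, b ∘ (Fin.lastCases yv xv : Fin (n+1) → α)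
      = Fin.snoc (b ∘ xv) (b yv) := by
    intro b; funext i
    refine Fin.lastCases ?_ ?_ i
    · simp [Fin.snoc_last]
    · intro j; simp [Fin.snoc_castSucc]
  have : {b : α → ℝ | b ∘ (Fin.lastCases yv xv : Fin (n+1) → α) ∈ S}
      = {b | Fin.snoc (b ∘ xv) (b yv) ∈ S} := by
    ext b; rw [Set.mem_setOf_eq, Set.mem_setOf_eq, hfun b]
  rwa [this] at h

theorem def_fib {S : Set (Fin (n + 1) → ℝ)} (hS : Def (L := L) (Fin (n + 1)) S) :
    Def (L := L) (Fin n ⊕ Fin 1) {v | v (Sum.inr 0) ∈ fib S (v ∘ Sum.inl)} :=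
  hS.snocRel Sum.inl (Sum.inr 0)

end Fib

theorem def_int (hlt : ∃ φ : L.Formula (Fin 2), ∀ v : Fin 2 → ℝ,
    φ.Realize v ↔ v 0 < v 1)
    {S : Set (Fin (n + 1) → ℝ)} (hS : Def (L := L) (Fin (n + 1)) S) :
    Def (L := L) (Fin n ⊕ Fin 1)
      {v | v (Sum.inr 0) ∈ interior (fib S (v ∘ Sum.inl))} := by
  have hBAD : Def (L := L) (((Fin n ⊕ Fin 1) ⊕ Fin 2) ⊕ Fin 1)
      ({w | w (Sum.inl (Sum.inr 0)) < w (Sum.inr 0)} ∩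
        ({w | w (Sum.inr 0) < w (Sum.inl (Sum.inr 1))} ∩
          {w | w (Sum.inr 0) ∈ fib S (w ∘ (fun j => Sum.inl (Sum.inl (Sum.inl j))))}ᶜ)) :=
    (def_lt hlt _ _).inter ((def_lt hlt _ _).inter
      ((Def.at2 (P := fun x y => y ∈ fib S x) (def_fib hS)
        (fun j => Sum.inl (Sum.inl (Sum.inl j))) (Sum.inr 0)).compl))
  have hSUB := hBAD.exs.compl
  have hT : Def (L := L) ((Fin n ⊕ Fin 1) ⊕ Fin 2)
      ({u | u (Sum.inr 0) < u (Sum.inl (Sum.inr 0))} ∩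
        ({u | u (Sum.inl (Sum.inr 0)) < u (Sum.inr 1)} ∩
          {u | ∃ c : Fin 1 → ℝ, Sum.elim u c ∈
            ({w | w (Sum.inl (Sum.inr 0)) < w (Sum.inr 0)} ∩
              ({w | w (Sum.inr 0) < w (Sum.inl (Sum.inr 1))} ∩
                {w | w (Sum.inr 0) ∈ fib S
                  (w ∘ (fun j => Sum.inl (Sum.inl (Sum.inl j))))}ᶜ))}ᶜ)) :=
    (def_lt hlt _ _).inter ((def_lt hlt _ _).inter hSUB)
  have hEx := hT.exs
  have hset : {v : Fin n ⊕ Fin 1 → ℝ | v (Sum.inr 0) ∈ interior (fib S (v ∘ Sum.inl))}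
      = {v | ∃ b : Fin 2 → ℝ, Sum.elim v b ∈
          ({u | u (Sum.inr 0) < u (Sum.inl (Sum.inr 0))} ∩
            ({u | u (Sum.inl (Sum.inr 0)) < u (Sum.inr 1)} ∩
              {u | ∃ c : Fin 1 → ℝ, Sum.elim u c ∈
                ({w | w (Sum.inl (Sum.inr 0)) < w (Sum.inr 0)} ∩
                  ({w | w (Sum.inr 0) < w (Sum.inl (Sum.inr 1))} ∩
                    {w | w (Sum.inr 0) ∈ fib S
                      (w ∘ (fun j => Sum.inl (Sum.inl (Sum.inl j))))}ᶜ))}ᶜ))} := by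
    ext v
    constructor
    · intro hv
      rw [Set.mem_setOf_eq, mem_interior_real] at hv
      obtain ⟨p, q, hp, hq, hsub⟩ := hv
      refine ⟨![p, q], ⟨?_, ?_, ?_⟩⟩
      · simpa using hp
      · simpa using hq
      · rintro ⟨c, hc1, hc2, hc3⟩
        refine hc3 ?_
        have h1 : p < c 0 := by simpa using hc1
        have h2 : c 0 < q := by simpa using hc2
        simpa [Function.comp_def] using hsub ⟨h1, h2⟩
    · rintro ⟨b, hb1, hb2, hb3⟩
      rw [Set.mem_setOf_eq, mem_interior_real]
      refine ⟨b 0, b 1, by simpa using hb1, by simpa using hb2, ?_⟩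
      intro z hz
      by_contra hzS
      refine hb3 ⟨fun _ => z, ?_, ?_, ?_⟩
      · simpa using hz.1
      · simpa using hz.2
      · simpa [Function.comp_def] using hzS
  rw [hset]
  exact hEx


theorem def_Ebd (hlt : ∃ φ : L.Formula (Fin 2), ∀ v : Fin 2 → ℝ,
    φ.Realize v ↔ v 0 < v 1)
    {S : Set (Fin (n + 1) → ℝ)} (hS : Def (L := L) (Fin (n + 1)) S) :
    Def (L := L) (Fin n ⊕ Fin 1) {v | v (Sum.inr 0) ∈ Ebd S (v ∘ Sum.inl)} := by
  exact (def_fib hS).diff (def_int hlt hS)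

theorem def_LE (hlt : ∃ φ : L.Formula (Fin 2), ∀ v : Fin 2 → ℝ,
    φ.Realize v ↔ v 0 < v 1)
    {S : Set (Fin (n + 1) → ℝ)}
    (hE : Def (L := L) (Fin n ⊕ Fin 1) {v | v (Sum.inr 0) ∈ Ebd S (v ∘ Sum.inl)})
    (k : ℕ) :
    Def (L := L) (Fin n ⊕ Fin 1)
      {v | ∃ z : Fin k → ℝ,
        Ebd S (v ∘ Sum.inl) ∩ Set.Iio (v (Sum.inr 0)) ⊆ Set.range z} := by
  have hV : Def (L := L) (((Fin n ⊕ Fin 1) ⊕ Fin k) ⊕ Fin 1)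
      ({w | w (Sum.inr 0) ∈ Ebd S (w ∘ (fun j => Sum.inl (Sum.inl (Sum.inl j))))} ∩
        ({w | w (Sum.inr 0) < w (Sum.inl (Sum.inl (Sum.inr 0)))} ∩
          ⋂ j : Fin k, {w | w (Sum.inr 0) ≠ w (Sum.inl (Sum.inr j))})) :=
    (Def.at2 (P := fun x y => y ∈ Ebd S x) hE
        (fun j => Sum.inl (Sum.inl (Sum.inl j))) (Sum.inr 0)).inter
      ((def_lt hlt _ _).inter (Def.iInter fun j => def_ne hlt _ _))
  have hW := hV.exs.compl
  have hEx := hW.exs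
  have hset : {v : Fin n ⊕ Fin 1 → ℝ | ∃ z : Fin k → ℝ,
        Ebd S (v ∘ Sum.inl) ∩ Set.Iio (v (Sum.inr 0)) ⊆ Set.range z}
      = {v | ∃ b : Fin k → ℝ, Sum.elim v b ∈
          {u | ∃ c : Fin 1 → ℝ, Sum.elim u c ∈
            ({w | w (Sum.inr 0) ∈ Ebd S (w ∘ (fun j => Sum.inl (Sum.inl (Sum.inl j))))} ∩
              ({w | w (Sum.inr 0) < w (Sum.inl (Sum.inl (Sum.inr 0)))} ∩
                ⋂ j : Fin k, {w | w (Sum.inr 0) ≠ w (Sum.inl (Sum.inr j))}))}ᶜ} := by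
    ext v
    simp only [Set.mem_setOf_eq]
    refine exists_congr fun z => ?_
    constructor
    · intro hsub
      intro hc
      obtain ⟨c, h1, h2, h3⟩ := hc
      have h1' : c 0 ∈ Ebd S (v ∘ Sum.inl) := by
        simpa [Function.comp_def] using h1
      have h2' : c 0 < v (Sum.inr 0) := by simpa using h2
      have hm := hsub ⟨h1', h2'⟩
      obtain ⟨j, hj⟩ := hm
      have := Set.mem_iInter.1 h3 j
      exact this (by simpa using hj.symm)
    · intro hne
      intro u hu
      by_contra hur
      refine hne ⟨fun _ => u, ?_, ?_, ?_⟩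
      · simpa [Function.comp_def] using hu.1
      · simpa using hu.2
      · refine Set.mem_iInter.2 fun j => ?_
        intro hj
        exact hur ⟨j, by simpa using hj.symm⟩
  rw [hset]
  exact hEx

theorem def_PT (hlt : ∃ φ : L.Formula (Fin 2), ∀ v : Fin 2 → ℝ,
    φ.Realize v ↔ v 0 < v 1)
    {S : Set (Fin (n + 1) → ℝ)}
    (hE : Def (L := L) (Fin n ⊕ Fin 1) {v | v (Sum.inr 0) ∈ Ebd S (v ∘ Sum.inl)})
    (hEfin : ∀ x, (Ebd S x).Finite) (i : ℕ) :
    Def (L := L) (Fin n ⊕ Fin 1) {v | ptP S i (v ∘ Sum.inl) (v (Sum.inr 0))} := by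
  have hfin : ∀ v : Fin n ⊕ Fin 1 → ℝ,
      (Ebd S (v ∘ Sum.inl) ∩ Set.Iio (v (Sum.inr 0))).Finite :=
    fun v => (hEfin _).subset Set.inter_subset_left
  rcases i with _ | i
  · have h := hE.inter (def_LE hlt hE 0)
    convert h using 1
    ext v
    simp only [ptP, Set.mem_setOf_eq, Set.mem_inter_iff]
    refine and_congr_right fun _ => ?_
    rw [cover_iff (hfin v) 0]
    omega
  · have h := hE.inter ((def_LE hlt hE (i + 1)).diff (def_LE hlt hE i))
    convert h using 1
    ext v
    simp only [ptP, Set.mem_setOf_eq, Set.mem_inter_iff, Set.mem_diff]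
    refine and_congr_right fun _ => ?_
    rw [cover_iff (hfin v) (i + 1), cover_iff (hfin v) i]
    omega

theorem def_Pio (hlt : ∃ φ : L.Formula (Fin 2), ∀ v : Fin 2 → ℝ,
    φ.Realize v ↔ v 0 < v 1)
    {S : Set (Fin (n + 1) → ℝ)} (hS : Def (L := L) (Fin (n + 1)) S) (p q : ℝ) :
    Def (L := L) (Fin n) {x | Set.Ioo p q ⊆ fib S x} := by
  have hV : Def (L := L) ((Fin n ⊕ Fin 2) ⊕ Fin 1)
      ({w | w (Sum.inl (Sum.inr 0)) < w (Sum.inr 0)} ∩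
        ({w | w (Sum.inr 0) < w (Sum.inl (Sum.inr 1))} ∩
          {w | w (Sum.inr 0) ∈ fib S (w ∘ (fun j => Sum.inl (Sum.inl j)))}ᶜ)) :=
    (def_lt hlt _ _).inter ((def_lt hlt _ _).inter
      ((Def.at2 (P := fun x y => y ∈ fib S x) (def_fib hS)
        (fun j => Sum.inl (Sum.inl j)) (Sum.inr 0)).compl))
  have hSUB := hV.exs.compl
  have hfix := hSUB.fix ![p, q]
  convert hfix using 1
  ext x
  simp only [Set.mem_setOf_eq, Set.mem_compl_iff]
  constructor
  · intro hsub
    rintro ⟨c, h1, h2, h3⟩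
    have h1' : p < c 0 := by simpa using h1
    have h2' : c 0 < q := by simpa using h2
    exact h3 (by simpa [Function.comp_def] using hsub ⟨h1', h2'⟩)
  · intro hne z hz
    by_contra hzf
    refine hne ⟨fun _ => z, ?_, ?_, ?_⟩
    · simpa using hz.1
    · simpa using hz.2
    · simpa [Function.comp_def] using hzf

theorem def_Dm {S : Set (Fin (n + 1) → ℝ)} (i : ℕ)
    (hPT : Def (L := L) (Fin n ⊕ Fin 1) {v | ptP S i (v ∘ Sum.inl) (v (Sum.inr 0))}) :
    Def (L := L) (Fin n) {x | ∃ y, ptP S i x y} := by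
  have h := hPT.exs
  convert h using 1
  ext x
  simp only [Set.mem_setOf_eq]
  constructor
  · rintro ⟨y, hy⟩
    exact ⟨fun _ => y, by simpa [Function.comp_def] using hy⟩
  · rintro ⟨b, hb⟩
    exact ⟨b 0, by simpa [Function.comp_def] using hb⟩

theorem def_Lo (hlt : ∃ φ : L.Formula (Fin 2), ∀ v : Fin 2 → ℝ,
    φ.Realize v ↔ v 0 < v 1) {S : Set (Fin (n + 1) → ℝ)} (i : ℕ)
    (hPT : Def (L := L) (Fin n ⊕ Fin 1) {v | ptP S i (v ∘ Sum.inl) (v (Sum.inr 0))})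
    (q : ℝ) :
    Def (L := L) (Fin n) {x | ∃ y, ptP S i x y ∧ y < q} := by
  have hA : Def (L := L) ((Fin n ⊕ Fin 1) ⊕ Fin 1)
      ({w | ptP S i (w ∘ (fun j => Sum.inl (Sum.inl j))) (w (Sum.inl (Sum.inr 0)))} ∩
        {w | w (Sum.inl (Sum.inr 0)) < w (Sum.inr 0)}) :=
    (Def.at2 (P := fun x y => ptP S i x y) hPT
      (fun j => Sum.inl (Sum.inl j)) (Sum.inl (Sum.inr 0))).inter (def_lt hlt _ _)
  have hfix := hA.fix (fun _ => q)
  have hEx := hfix.exs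
  convert hEx using 1
  ext x
  simp only [Set.mem_setOf_eq]
  constructor
  · rintro ⟨y, hy, hyq⟩
    refine ⟨fun _ => y, ?_, ?_⟩
    · simpa [Function.comp_def] using hy
    · simpa using hyq
  · rintro ⟨b, hb, hbq⟩
    exact ⟨b 0, by simpa [Function.comp_def] using hb, by simpa using hbq⟩

theorem def_Hi (hlt : ∃ φ : L.Formula (Fin 2), ∀ v : Fin 2 → ℝ,
    φ.Realize v ↔ v 0 < v 1) {S : Set (Fin (n + 1) → ℝ)} (i : ℕ)
    (hPT : Def (L := L) (Fin n ⊕ Fin 1) {v | ptP S i (v ∘ Sum.inl) (v (Sum.inr 0))})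
    (q : ℝ) :
    Def (L := L) (Fin n) {x | ∃ y, ptP S i x y ∧ q < y} := by
  have hA : Def (L := L) ((Fin n ⊕ Fin 1) ⊕ Fin 1)
      ({w | ptP S i (w ∘ (fun j => Sum.inl (Sum.inl j))) (w (Sum.inl (Sum.inr 0)))} ∩
        {w | w (Sum.inr 0) < w (Sum.inl (Sum.inr 0))}) :=
    (Def.at2 (P := fun x y => ptP S i x y) hPT
      (fun j => Sum.inl (Sum.inl j)) (Sum.inl (Sum.inr 0))).inter (def_lt hlt _ _)
  have hfix := hA.fix (fun _ => q)
  have hEx := hfix.exs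
  convert hEx using 1
  ext x
  simp only [Set.mem_setOf_eq]
  constructor
  · rintro ⟨y, hy, hyq⟩
    refine ⟨fun _ => y, ?_, ?_⟩
    · simpa [Function.comp_def] using hy
    · simpa using hyq
  · rintro ⟨b, hb, hbq⟩
    exact ⟨b 0, by simpa [Function.comp_def] using hb, by simpa using hbq⟩


theorem Efin
    (homin : ∀ A : Set (Fin 1 → ℝ), RealDefinable L 1 A →
      ∃ (F : Finset ℝ) (s : Finset (EReal × EReal)),
        (fun v : Fin 1 → ℝ => v 0) '' A =
          ↑F ∪ ⋃ p ∈ s, {x : ℝ | p.1 < (x : EReal) ∧ (x : EReal) < p.2})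
    {S : Set (Fin (n + 1) → ℝ)} (hS : Def (L := L) (Fin (n + 1)) S)
    (x : Fin n → ℝ) : (Ebd S x).Finite := by
  have hB := hS.snocRel (α := Fin 1 ⊕ Fin n) Sum.inr (Sum.inl 0)
  have hA : Def (L := L) (Fin 1) {u : Fin 1 → ℝ | Fin.snoc x (u 0) ∈ S} := hB.fix x
  obtain ⟨F, s, himg⟩ := homin _ hA.toRealDefinable
  have himg' : (fun v : Fin 1 → ℝ => v 0) '' {u : Fin 1 → ℝ | Fin.snoc x (u 0) ∈ S}
      = fib S x := by
    ext y
    constructor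
    · rintro ⟨u, hu, rfl⟩; exact hu
    · intro hy; exact ⟨fun _ => y, hy, rfl⟩
  rw [himg'] at himg
  have hUopen : IsOpen (⋃ p ∈ s, {z : ℝ | p.1 < (z : EReal) ∧ (z : EReal) < p.2}) := by
    refine isOpen_biUnion fun p _ => ?_
    have h1 : IsOpen {z : ℝ | p.1 < (z : EReal)} :=
      isOpen_lt continuous_const continuous_coe_real_ereal
    have h2 : IsOpen {z : ℝ | (z : EReal) < p.2} :=
      isOpen_lt continuous_coe_real_ereal continuous_const
    have : {z : ℝ | p.1 < (z : EReal) ∧ (z : EReal) < p.2}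
        = {z : ℝ | p.1 < (z : EReal)} ∩ {z : ℝ | (z : EReal) < p.2} := rfl
    rw [this]; exact h1.inter h2
  have hUsub : (⋃ p ∈ s, {z : ℝ | p.1 < (z : EReal) ∧ (z : EReal) < p.2})
      ⊆ interior (fib S x) :=
    interior_maximal (himg ▸ Set.subset_union_right) hUopen
  refine F.finite_toSet.subset ?_
  intro y hy
  have hyfib : y ∈ fib S x := hy.1
  rw [himg] at hyfib
  rcases hyfib with hyF | hyU
  · exact hyF
  · exact absurd (hUsub hyU) hy.2

theorem defMeasurable
    (hlt : ∃ φ : L.Formula (Fin 2), ∀ v : Fin 2 → ℝ, φ.Realize v ↔ v 0 < v 1)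
    (homin : ∀ A : Set (Fin 1 → ℝ), RealDefinable L 1 A →
      ∃ (F : Finset ℝ) (s : Finset (EReal × EReal)),
        (fun v : Fin 1 → ℝ => v 0) '' A =
          ↑F ∪ ⋃ p ∈ s, {x : ℝ | p.1 < (x : EReal) ∧ (x : EReal) < p.2}) :
    ∀ (n : ℕ) (S : Set (Fin n → ℝ)), Def (L := L) (Fin n) S → MeasurableSet S := by
  intro n
  induction n with
  | zero => intro S _; exact Subsingleton.measurableSet
  | succ n IH =>
    intro S hS
    have hE := def_Ebd hlt hS
    have hEfin : ∀ x, (Ebd S x).Finite := Efin homin hS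
    have hPT := def_PT hlt hE hEfin
    set initF : (Fin (n + 1) → ℝ) → Fin n → ℝ := fun v j => v (Fin.castSucc j) with hinitF
    have hinit : Measurable initF :=
      measurable_pi_lambda _ fun j => measurable_pi_apply _
    have hlastm : Measurable (fun v : Fin (n + 1) → ℝ => v (Fin.last n)) :=
      measurable_pi_apply _
    have hsnoc : ∀ v : Fin (n + 1) → ℝ, Fin.snoc (initF v) (v (Fin.last n)) = v := by
      intro v
      exact Fin.snoc_init_self v
    have hfibmem : ∀ v : Fin (n + 1) → ℝ, v ∈ S ↔ v (Fin.last n) ∈ fib S (initF v) := by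
      intro v
      show v ∈ S ↔ Fin.snoc (initF v) (v (Fin.last n)) ∈ S
      rw [hsnoc v]
    have haux : ∀ i x {y y' : ℝ}, y < y' → ptP S i x y → ptP S i x y' → False := by
      intro i x y y' hyy h h'
      have hss : Ebd S x ∩ Set.Iio y ⊂ Ebd S x ∩ Set.Iio y' := by
        constructor
        · exact Set.inter_subset_inter_right _ (Set.Iio_subset_Iio hyy.le)
        · intro hsub2
          exact lt_irrefl y (hsub2 ⟨h.1, hyy⟩).2
      have hcard := Set.ncard_lt_ncard hss ((hEfin x).subset Set.inter_subset_left)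
      rw [h.2, h'.2] at hcard
      exact lt_irrefl i hcard
    have huniq : ∀ i x {y y' : ℝ}, ptP S i x y → ptP S i x y' → y = y' := by
      intro i x y y' h h'
      by_contra hne
      rcases lt_or_gt_of_ne hne with hlt' | hlt'
      · exact haux i x hlt' h h'
      · exact haux i x hlt' h' h
    have hdec : S = {v | v (Fin.last n) ∈ interior (fib S (initF v))}
        ∪ ⋃ i : ℕ, {v | ptP S i (initF v) (v (Fin.last n))} := by
      ext v
      constructor
      · intro hv
        have hfib : v (Fin.last n) ∈ fib S (initF v) := (hfibmem v).1 hv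
        by_cases hy : v (Fin.last n) ∈ interior (fib S (initF v))
        · exact Or.inl hy
        · exact Or.inr (Set.mem_iUnion.2
            ⟨(Ebd S (initF v) ∩ Set.Iio (v (Fin.last n))).ncard, ⟨⟨hfib, hy⟩, rfl⟩⟩)
      · rintro (hv | hv)
        · exact (hfibmem v).2 (interior_subset hv)
        · obtain ⟨i, hi⟩ := Set.mem_iUnion.1 hv
          exact (hfibmem v).2 hi.1.1
    rw [hdec]
    apply MeasurableSet.union
    · have hint : {v : Fin (n + 1) → ℝ | v (Fin.last n) ∈ interior (fib S (initF v))}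
          = ⋃ (p : ℚ) (q : ℚ), (initF ⁻¹' {x | Set.Ioo (p : ℝ) q ⊆ fib S x})
              ∩ ((fun v : Fin (n + 1) → ℝ => v (Fin.last n)) ⁻¹' Set.Ioo (p : ℝ) (q : ℝ)) := by
        ext v
        simp only [Set.mem_setOf_eq, Set.mem_iUnion, Set.mem_inter_iff, Set.mem_preimage,
          Set.mem_Ioo]
        rw [mem_interior_rat]
        constructor
        · rintro ⟨p, q, h1, h2, h3⟩; exact ⟨p, q, h3, h1, h2⟩
        · rintro ⟨p, q, h3, h1, h2⟩; exact ⟨p, q, h1, h2, h3⟩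
      rw [hint]
      exact MeasurableSet.iUnion fun p => MeasurableSet.iUnion fun q =>
        ((IH _ (def_Pio hlt hS _ _)).preimage hinit).inter
          (measurableSet_Ioo.preimage hlastm)
    · refine MeasurableSet.iUnion fun i => ?_
      have hGi : {v : Fin (n + 1) → ℝ | ptP S i (initF v) (v (Fin.last n))}
          = (initF ⁻¹' {x | ∃ y, ptP S i x y})
            ∩ ((⋃ q : ℚ, initF ⁻¹' {x | ∃ y, ptP S i x y ∧ y < (q : ℝ)}
                ∩ (fun v : Fin (n + 1) → ℝ => v (Fin.last n)) ⁻¹' Set.Ioi (q : ℝ))ᶜ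
              ∩ (⋃ q : ℚ, initF ⁻¹' {x | ∃ y, ptP S i x y ∧ (q : ℝ) < y}
                ∩ (fun v : Fin (n + 1) → ℝ => v (Fin.last n)) ⁻¹' Set.Iio (q : ℝ))ᶜ) := by
        ext v
        simp only [Set.mem_setOf_eq, Set.mem_inter_iff, Set.mem_preimage, Set.mem_compl_iff,
          Set.mem_iUnion, Set.mem_Ioi, Set.mem_Iio, not_exists]
        constructor
        · intro hv
          refine ⟨⟨_, hv⟩, ?_, ?_⟩
          · rintro q ⟨⟨y', hy', hy'q⟩, hqy⟩
            have := huniq i (initF v) hy' hv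
            subst this
            exact lt_irrefl _ (hy'q.trans hqy)
          · rintro q ⟨⟨y', hy', hqy'⟩, hyq⟩
            have := huniq i (initF v) hy' hv
            subst this
            exact lt_irrefl _ (hqy'.trans hyq)
        · rintro ⟨⟨y₀, hy₀⟩, h2, h3⟩
          have hyy : v (Fin.last n) = y₀ := by
            by_contra hne
            rcases lt_or_gt_of_ne hne with hl | hl
            · obtain ⟨q, hq1, hq2⟩ := exists_rat_btwn hl
              exact h3 q ⟨⟨y₀, hy₀, hq2⟩, hq1⟩
            · obtain ⟨q, hq1, hq2⟩ := exists_rat_btwn hl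
              exact h2 q ⟨⟨y₀, hy₀, hq1⟩, hq2⟩
          rw [hyy]
          exact hy₀
      rw [hGi]
      refine ((IH _ (def_Dm i (hPT i))).preimage hinit).inter
        (MeasurableSet.inter ?_ ?_)
      · refine (MeasurableSet.iUnion fun q => ?_).compl
        exact ((IH _ (def_Lo hlt i (hPT i) q)).preimage hinit).inter
          (measurableSet_Ioi.preimage hlastm)
      · refine (MeasurableSet.iUnion fun q => ?_).compl
        exact ((IH _ (def_Hi hlt i (hPT i) q)).preimage hinit).inter
          (measurableSet_Iio.preimage hlastm)


end Constructions

end Aux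

/-- Every set definable (with parameters) over an o-minimal expansion of the
ordered field of real numbers is a Borel subset of `ℝⁿ`. -/
theorem definable_measurableSet
    (hR : IsOMinimalRealExpansion L) (n ℓ : ℕ)
    (φ : L.Formula (Fin n ⊕ Fin ℓ)) (w : Fin ℓ → ℝ) :
    MeasurableSet {a : Fin n → ℝ | φ.Realize (Sum.elim a w)} := by
  obtain ⟨hlt, -, -, homin⟩ := hR
  exact defMeasurable hlt homin n _ (def_of_formula φ w)

end OMin
end

section
/- There exist a probability measure D on (Z, Σ_Z), where Z = ℝ × {0,1} and Σ_Z = B(ℝ) ⊗ P({0,1}), and a non-empty hypothesis space H ⊆ {0,1}^ℝ with Γ(h) ∈ Σ_Z for every h ∈ H and vc(H) = 1, such that for every m ∈ ℕ the map U : Z^m → [0,1], z ↦ sup_{h∈H} |er_D(h) − ˆer_z(h)|, is not Σ_Z^m-measurable; in particular, H is not well-behaved with respect to {D}. -/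
open MeasureTheory

namespace PAC

variable {X : Type*}

open Cardinal in
lemma exists_nonmeas : ∃ S : Set ℝ, ¬ MeasurableSet S := by
  by_contra h
  push_neg at h
  have hgen : (Real.measurableSpace : MeasurableSpace ℝ)
      = .generateFrom (Set.range Set.Iio) := by
    rw [BorelSpace.measurable_eq (α := ℝ), borel_eq_generateFrom_Iio]
  have h1 : #{ t : Set ℝ | @MeasurableSet ℝ (.generateFrom (Set.range Set.Iio)) t } ≤ 𝔠 :=
    MeasurableSpace.cardinal_measurableSet_le_continuum
      (Cardinal.mk_range_le.trans (by rw [Cardinal.mk_real]))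
  have h2 : { t : Set ℝ | @MeasurableSet ℝ (.generateFrom (Set.range Set.Iio)) t } = Set.univ := by
    ext t; simpa using (hgen ▸ h t)
  rw [h2, Cardinal.mk_univ, Cardinal.mk_set, Cardinal.mk_real] at h1
  exact absurd h1 (not_le.2 (Cardinal.cantor 𝔠))

/-- A nonmeasurable subset of ℝ avoiding 0, which is infinite. -/
lemma exists_good_nonmeas : ∃ S : Set ℝ, ¬ MeasurableSet S ∧ (0:ℝ) ∉ S ∧ S.Infinite := by
  obtain ⟨T, hT⟩ := exists_nonmeas
  refine ⟨T \ {0}, ?_, by simp, ?_⟩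
  · intro hmeas
    have hsub : MeasurableSet (T ∩ {0} : Set ℝ) :=
      ((Set.to_countable ({0} : Set ℝ)).mono Set.inter_subset_right).measurableSet
    have : MeasurableSet T := by
      have : T = (T \ {0}) ∪ (T ∩ {0}) := by
        ext x; by_cases hx : x = (0:ℝ) <;> simp [hx]
      rw [this]; exact hmeas.union hsub
    exact hT this
  · intro hfin
    apply hT
    have hm : MeasurableSet (T \ {0} : Set ℝ) := hfin.measurableSet
    have h2 : T = (T \ {0}) ∪ (T ∩ {0}) := by
      ext x; by_cases hx : x = (0:ℝ) <;> simp [hx]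
    rw [h2]
    exact hm.union (((Set.to_countable ({0} : Set ℝ)).mono Set.inter_subset_right).measurableSet)

lemma graph_point (a : ℝ) :
    graph (fun x => decide (x = a)) =
      ({a} ×ˢ {true}) ∪ ({a}ᶜ ×ˢ ({false} : Set Bool)) := by
  ext ⟨x, b⟩
  cases b <;> simp [graph]

lemma graph_point_meas (a : ℝ) :
    MeasurableSet (graph (fun x => decide (x = a))) := by
  rw [graph_point]
  exact (((measurableSet_singleton a).prod (measurableSet_singleton true)).union
    (((measurableSet_singleton a).compl).prod (measurableSet_singleton false)))

/-- There are a probability distribution `D` on `Z = ℝ × {0,1}` (with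
`Σ_Z = B(ℝ) ⊗ P({0,1})`) and a hypothesis space `H` with measurable graphs and
VC dimension `1` such that for every `m` the map
`U : Z^m → [0,1]`, `z ↦ sup_{h∈H} |er_D(h) − ˆer_z(h)|`, is not `Σ_Z^m`-measurable;
in particular, `H` is not well-behaved with respect to `{D}`. -/
theorem exists_finiteVC_not_wellBehaved :
    ∃ (D : Measure (ℝ × Bool)) (H : Set (ℝ → Bool)),
      IsProbabilityMeasure D ∧ H.Nonempty ∧
      (∀ h ∈ H, MeasurableSet (graph h)) ∧
      ((∃ A : Finset ℝ, A.card = 1 ∧ Shatters H A) ∧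
        (∀ A : Finset ℝ, Shatters H A → A.card ≤ 1)) ∧
      (∀ m : ℕ, 0 < m → ¬ Measurable (U H m D)) ∧
      ¬ WellBehaved H {D} := by
  classical
  obtain ⟨S, hSm, hS0, hSinf⟩ := exists_good_nonmeas
  obtain ⟨x₀, hx₀⟩ := hSinf.nonempty
  obtain ⟨x₁, hx₁, hx₁ne'⟩ := (hSinf.diff (Set.finite_singleton x₀)).nonempty
  have hx₁ne : x₁ ≠ x₀ := by simpa using hx₁ne'
  set D : Measure (ℝ × Bool) := Measure.dirac ((0:ℝ), false) with hD
  set H : Set (ℝ → Bool) := (fun a : ℝ => fun x : ℝ => decide (x = a)) '' S with hHdef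
  have hne : H.Nonempty := ⟨_, ⟨x₀, hx₀, rfl⟩⟩
  haveI : Nonempty H := hne.to_subtype
  -- true error of every hypothesis in H is 0
  have htrue : ∀ a : ℝ, a ∈ S → trueError D (fun x => decide (x = a)) = 0 := by
    intro a ha
    have hEm : MeasurableSet {z : ℝ × Bool | (fun x => decide (x = a)) z.1 ≠ z.2} := by
      have hEq : {z : ℝ × Bool | (fun x => decide (x = a)) z.1 ≠ z.2}
          = (graph (fun x => decide (x = a)))ᶜ := by
        ext z; simp [graph]
      rw [hEq]; exact (graph_point_meas a).compl
    have hnotmem : ((0:ℝ), false) ∉ {z : ℝ × Bool | (fun x => decide (x = a)) z.1 ≠ z.2} := by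
      simp only [Set.mem_setOf_eq, ne_eq, not_not]
      simp only [decide_eq_false_iff_not]
      intro h; exact hS0 (h ▸ ha)
    unfold trueError
    rw [hD, Measure.dirac_apply' _ hEm, Set.indicator_of_notMem hnotmem]
    simp
  -- empirical error on a constant sample
  have hemp : ∀ (m : ℕ), 0 < m → ∀ x a : ℝ,
      empError (fun _ : Fin m => ((x:ℝ), false)) (fun y => decide (y = a))
        = if x = a then 1 else 0 := by
    intro m hm x a
    unfold empError
    by_cases hxa : x = a
    · subst hxa
      rw [if_pos rfl]
      rw [Finset.filter_true_of_mem (fun i _ => by simp)]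
      simp only [Finset.card_univ, Fintype.card_fin]
      exact div_self (Nat.cast_ne_zero.2 hm.ne')
    · rw [if_neg hxa, Finset.filter_false_of_mem (fun i _ => by simp [hxa])]
      simp
  -- the value of U on constant samples
  have hU : ∀ (m : ℕ), 0 < m → ∀ x : ℝ,
      U H m D (fun _ : Fin m => ((x:ℝ), false)) = if x ∈ S then 1 else 0 := by
    intro m hm x
    unfold U
    by_cases hx : x ∈ S
    · simp only [hx, if_true]
      have hb : BddAbove (Set.range fun h : H =>
          |trueError D h.1 - empError (fun _ : Fin m => ((x:ℝ), false)) h.1|) := by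
        refine ⟨1, ?_⟩
        rintro v ⟨⟨h, a, ha, rfl⟩, rfl⟩
        simp only [htrue a ha, hemp m hm x a, zero_sub, abs_neg]
        split <;> simp
      apply le_antisymm
      · apply ciSup_le
        rintro ⟨h, a, ha, rfl⟩
        simp only [htrue a ha, hemp m hm x a, zero_sub, abs_neg]
        split <;> simp
      · have hle := le_ciSup hb (⟨fun y => decide (y = x), ⟨x, hx, rfl⟩⟩ : H)
        simp only [htrue x hx, hemp m hm x x, if_true, zero_sub, abs_neg, abs_one] at hle
        exact hle
    · simp only [hx, if_false]
      have hz : ∀ h : H,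
          |trueError D h.1 - empError (fun _ : Fin m => ((x:ℝ), false)) h.1| = 0 := by
        rintro ⟨h, a, ha, rfl⟩
        have hxa : x ≠ a := fun hc => hx (hc ▸ ha)
        simp [htrue a ha, hemp m hm x a, hxa]
      calc (⨆ h : H, |trueError D h.1 - empError (fun _ : Fin m => ((x:ℝ), false)) h.1|)
          = ⨆ _ : H, (0:ℝ) := iSup_congr hz
        _ = 0 := ciSup_const
  -- U is non-measurable
  have hnm : ∀ m : ℕ, 0 < m → ¬ Measurable (U H m D) := by
    intro m hm hMeas
    have hg : Measurable (fun x : ℝ => (fun _ : Fin m => ((x:ℝ), false))) :=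
      measurable_pi_lambda _ fun _ => measurable_id.prodMk measurable_const
    have hf : Measurable fun x : ℝ => U H m D (fun _ : Fin m => ((x:ℝ), false)) :=
      hMeas.comp hg
    apply hSm
    have hSeq : S = (fun x : ℝ => U H m D (fun _ : Fin m => ((x:ℝ), false)))
        ⁻¹' (Set.Ioi (1/2 : ℝ)) := by
      ext x
      simp only [Set.mem_preimage, Set.mem_Ioi, hU m hm x]
      by_cases hx : x ∈ S <;> simp [hx] <;> norm_num
    rw [hSeq]
    exact hf measurableSet_Ioi
  refine ⟨D, H, ?_, hne, ?_, ⟨⟨{x₀}, Finset.card_singleton _, ?_⟩, ?_⟩, hnm, ?_⟩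
  · rw [hD]; infer_instance
  · rintro h ⟨a, _, rfl⟩; exact graph_point_meas a
  · -- shatters {x₀}
    intro f
    cases hf : f x₀
    · refine ⟨fun y => decide (y = x₁), ⟨x₁, hx₁, rfl⟩, ?_⟩
      intro x hxmem
      rw [Finset.mem_singleton] at hxmem
      subst hxmem
      rw [hf]
      exact decide_eq_false fun h => hx₁ne h.symm
    · refine ⟨fun y => decide (y = x₀), ⟨x₀, hx₀, rfl⟩, ?_⟩
      intro x hxmem
      rw [Finset.mem_singleton] at hxmem
      subst hxmem
      simp [hf]
  · -- VC dimension at most 1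
    intro A hA
    by_contra hc
    push_neg at hc
    obtain ⟨x, hx, y, hy, hxy⟩ := Finset.one_lt_card.mp hc
    obtain ⟨h, ⟨a, _, rfl⟩, hagree⟩ := hA (fun _ => true)
    have h1 := hagree x hx
    have h2 := hagree y hy
    simp only [decide_eq_true_eq] at h1 h2
    exact hxy (h1.trans h2.symm)
  · -- not well-behaved
    rintro ⟨-, mH, hmH, hall⟩
    exact hnm mH hmH ((hall mH le_rfl).2 D (Set.mem_singleton D))

end PAC
end
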